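/- arXiv:1111.3063 — 8 statements merged into one kernel-verified Lean document; each statement's English description precedes it below -/
import Mathlib

section
/- Let (a_i)_{i≥1} be i.i.d. real-valued random variables with E[e^{θ a_1}] < ∞ for a fixed θ > 0, let A(t) = Σ_{i=1}^{t} a_i, and let α(θ) = (1/θ) log E[e^{θ A(1)}]. Then for every t ∈ ℕ and every σ ≥ 0, P{ max_{0 ≤ u ≤ t} ( A(u) − α(θ) u ) > σ } ≤ e^{−θ σ}. -/
open MeasureTheory ProbabilityTheory
open scoped ENNReal NNReal

/-- Maximal inequality for the arrival process: if `(a i)` are i.i.d. with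
`E[exp (θ a 1)] < ∞` for `θ > 0`, `A t = Σ_{i<t} a i` and
`α = (1/θ) log E[exp (θ A 1)]`, then for every `t` and `σ ≥ 0`,
`P{ max_{0 ≤ u ≤ t} (A u − α u) > σ } ≤ exp (−θ σ)`. -/
theorem maximal_inequality_arrival
    {Ω : Type*} [MeasurableSpace Ω] (μ : Measure Ω) [IsProbabilityMeasure μ]
    (a : ℕ → Ω → ℝ) (ha_meas : ∀ i, Measurable (a i))
    (ha_indep : iIndepFun a μ)
    (ha_ident : ∀ i, IdentDistrib (a i) (a 0) μ μ)
    (θ : ℝ) (hθ : 0 < θ)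
    (ha_int : Integrable (fun ω => Real.exp (θ * a 0 ω)) μ)
    (A : ℕ → Ω → ℝ) (hA : ∀ t ω, A t ω = ∑ i ∈ Finset.range t, a i ω)
    (α : ℝ) (hα : α = (1 / θ) * Real.log (∫ ω, Real.exp (θ * A 1 ω) ∂μ))
    (t : ℕ) (σ : ℝ) (hσ : 0 ≤ σ) :
    μ {ω | σ < (Finset.range (t + 1)).sup' ⟨0, Finset.mem_range.mpr (Nat.succ_pos t)⟩
        (fun u => A u ω - α * u)}
      ≤ ENNReal.ofReal (Real.exp (-θ * σ)) := by
  classical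
  set M : ℝ := ∫ ω, Real.exp (θ * a 0 ω) ∂μ with hMdef
  have hM : 0 < M := by
    have := mgf_pos (μ := μ) (X := a 0) (t := θ) ha_int
    simpa [mgf, hMdef] using this
  have hident' : ∀ i, IdentDistrib (fun ω => Real.exp (θ * a i ω))
      (fun ω => Real.exp (θ * a 0 ω)) μ μ :=
    fun i => (ha_ident i).comp ((measurable_id.const_mul θ).exp)
  have hint : ∀ i, Integrable (fun ω => Real.exp (θ * a i ω)) μ :=
    fun i => (hident' i).integrable_iff.2 ha_int
  have hMi : ∀ i, (∫ ω, Real.exp (θ * a i ω) ∂μ) = M :=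
    fun i => (hident' i).integral_eq
  set g : ℕ → Ω → ℝ := fun k ω => Real.exp (θ * a k ω) / M with hgdef
  have hg_meas : ∀ k, Measurable (g k) :=
    fun k => (((ha_meas k).const_mul θ).exp).div_const M
  have hg_pos : ∀ k ω, 0 < g k ω := fun k ω => div_pos (Real.exp_pos _) hM
  have hprod_rw : ∀ (s : Finset ℕ) (ω : Ω),
      ∏ k ∈ s, g k ω = Real.exp (θ * (∑ k ∈ s, a k) ω) / M ^ s.card := by
    intro s ω
    simp only [hgdef]
    rw [Finset.prod_div_distrib, Finset.prod_const, Finset.sum_apply, Finset.mul_sum,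
      Real.exp_sum]
  have hint_sum : ∀ s : Finset ℕ,
      Integrable (fun ω => Real.exp (θ * (∑ k ∈ s, a k) ω)) μ :=
    fun s => ha_indep.integrable_exp_mul_sum ha_meas (fun i _ => hint i)
  have hprod_int : ∀ s : Finset ℕ, Integrable (fun ω => ∏ k ∈ s, g k ω) μ := by
    intro s
    refine ((hint_sum s).div_const (M ^ s.card)).congr ?_
    exact Filter.Eventually.of_forall fun ω => (hprod_rw s ω).symm
  have hprod_eq : ∀ s : Finset ℕ, (∫ ω, ∏ k ∈ s, g k ω ∂μ) = 1 := by
    intro s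
    have h1 : (∫ ω, Real.exp (θ * (∑ k ∈ s, a k) ω) ∂μ) = M ^ s.card := by
      have h2 := ha_indep.mgf_sum ha_meas (t := θ) s
      simp only [mgf] at h2
      rw [h2]
      simp only [hMi, Finset.prod_const]
    calc (∫ ω, ∏ k ∈ s, g k ω ∂μ)
        = ∫ ω, Real.exp (θ * (∑ k ∈ s, a k) ω) / M ^ s.card ∂μ := by
          exact integral_congr_ae (Filter.Eventually.of_forall fun ω => hprod_rw s ω)
      _ = (∫ ω, Real.exp (θ * (∑ k ∈ s, a k) ω) ∂μ) / M ^ s.card := by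
          rw [integral_div]
      _ = 1 := by
          rw [h1, div_self (pow_ne_zero _ hM.ne')]
  set f : ℕ → Ω → ℝ := fun n ω => ∏ k ∈ Finset.range n, g k ω with hfdef
  have hf_meas : ∀ n, Measurable (f n) :=
    fun n => Finset.measurable_prod _ fun k _ => hg_meas k
  have hexpα : Real.exp (θ * α) = M := by
    have h1 : (∫ ω, Real.exp (θ * A 1 ω) ∂μ) = M := by
      refine integral_congr_ae (Filter.Eventually.of_forall fun ω => ?_)
      simp only [hA, Finset.sum_range_one]
    have h2 : θ * ((1 / θ) * Real.log M) = Real.log M := by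
      field_simp
    rw [hα, h1, h2, Real.exp_log hM]
  have hfA : ∀ u ω, f u ω = Real.exp (θ * (A u ω - α * u)) := by
    intro u ω
    have h1 := hprod_rw (Finset.range u) ω
    rw [Finset.card_range] at h1
    show (∏ k ∈ Finset.range u, g k ω) = _
    rw [h1, hA, ← hexpα, ← Real.exp_nat_mul, ← Real.exp_sub]
    congr 1
    rw [Finset.sum_apply]
    ring
  set ℱ := Filtration.natural f (fun n => (hf_meas n).stronglyMeasurable) with hFdef
  have hadapted : StronglyAdapted ℱ f := Filtration.stronglyAdapted_natural _
  have hmle : ∀ S : Set ℕ,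
      (⨆ k ∈ S, MeasurableSpace.comap (a k) (inferInstance : MeasurableSpace ℝ))
        ≤ ‹MeasurableSpace Ω› :=
    fun S => iSup₂_le fun k _ => (ha_meas k).comap_le
  have hprod_meas : ∀ (S : Set ℕ) (s : Finset ℕ), (∀ k ∈ s, k ∈ S) →
      Measurable[⨆ k ∈ S, MeasurableSpace.comap (a k) (inferInstance : MeasurableSpace ℝ)]
        (fun ω => ∏ k ∈ s, g k ω) := by
    intro S s hs
    refine Finset.measurable_prod _ fun k hk => ?_
    have h1 : Measurable[MeasurableSpace.comap (a k) (inferInstance : MeasurableSpace ℝ)]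
        (a k) := Measurable.of_comap_le le_rfl
    exact (((h1.const_mul θ).exp).div_const M).mono
      (le_iSup₂ (f := fun k (_ : k ∈ S) =>
        MeasurableSpace.comap (a k) (inferInstance : MeasurableSpace ℝ)) k (hs k hk)) le_rfl
  have hFle : ∀ i, ℱ i ≤
      ⨆ k ∈ {k | k < i}, MeasurableSpace.comap (a k) (inferInstance : MeasurableSpace ℝ) := by
    intro i
    rw [hFdef]
    show (⨆ j, ⨆ _ : j ≤ i, MeasurableSpace.comap (f j) (inferInstance : MeasurableSpace ℝ))
      ≤ _
    refine iSup₂_le fun j hj => ?_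
    refine Measurable.comap_le ?_
    exact hprod_meas _ _ (fun k hk => lt_of_lt_of_le (Finset.mem_range.1 hk) hj)
  have hmart : Martingale f ℱ μ := by
    refine ⟨hadapted, fun i j hij => ?_⟩
    set h : Ω → ℝ := fun ω => ∏ k ∈ Finset.Ico i j, g k ω with hhdef
    have hsplit : f j = f i * h := by
      funext ω
      show (∏ k ∈ Finset.range j, g k ω) = (∏ k ∈ Finset.range i, g k ω) * _
      rw [Finset.prod_range_mul_prod_Ico _ hij]
    have hhint : Integrable h μ := hprod_int _
    have hfjint : Integrable (f i * h) μ := by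
      rw [← hsplit]; exact hprod_int _
    have hindep : Indep
        (⨆ k ∈ {k | i ≤ k}, MeasurableSpace.comap (a k) (inferInstance : MeasurableSpace ℝ))
        (ℱ i) μ := by
      refine indep_of_indep_of_le_right ?_ (hFle i)
      refine indep_iSup_of_disjoint (fun k => (ha_meas k).comap_le) ha_indep ?_
      rw [Set.disjoint_left]
      intro k hk hk'
      exact absurd (show k < i from hk') (not_lt.2 (show i ≤ k from hk))
    have hh_sm : StronglyMeasurable[⨆ k ∈ {k | i ≤ k},
        MeasurableSpace.comap (a k) (inferInstance : MeasurableSpace ℝ)] h :=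
      (hprod_meas _ _ (fun k hk => (Finset.mem_Ico.1 hk).1)).stronglyMeasurable
    have hcond : μ[h | ℱ i] =ᵐ[μ] fun _ => ∫ ω, h ω ∂μ :=
      condExp_indep_eq (hmle _) (ℱ.le i) hh_sm hindep
    have hh1 : (∫ ω, h ω ∂μ) = 1 := hprod_eq _
    rw [hsplit]
    refine (condExp_mul_of_stronglyMeasurable_left (hadapted i) hfjint hhint).trans ?_
    filter_upwards [hcond] with ω hω
    simp only [Pi.mul_apply, hω, hh1, mul_one]
  have hnonneg : 0 ≤ f :=
    fun n ω => le_of_lt (Finset.prod_pos fun k _ => hg_pos k ω)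
  set ε : NNReal := (Real.exp (θ * σ)).toNNReal with hεdef
  have hεs : (ε : ℝ) = Real.exp (θ * σ) := Real.coe_toNNReal _ (Real.exp_nonneg _)
  have hmax := maximal_ineq hmart.submartingale hnonneg (ε := ε) t
  have hset_le : ENNReal.ofReal (∫ ω in {ω | (ε : ℝ) ≤
      (Finset.range (t + 1)).sup' Finset.nonempty_range_add_one fun k => f k ω}, f t ω ∂μ) ≤ 1 := by
    refine le_trans (ENNReal.ofReal_le_ofReal (setIntegral_le_integral (hprod_int _)
      (Filter.Eventually.of_forall fun ω => hnonneg t ω))) ?_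
    rw [show (∫ ω, f t ω ∂μ) = 1 from hprod_eq _]
    simp
  have hμS : (ε : ℝ≥0∞) * μ {ω | (ε : ℝ) ≤
      (Finset.range (t + 1)).sup' Finset.nonempty_range_add_one fun k => f k ω} ≤ 1 := by
    exact le_trans hmax hset_le
  have hsub : {ω | σ < (Finset.range (t + 1)).sup' Finset.nonempty_range_add_one
      (fun u => A u ω - α * u)} ⊆ {ω | (ε : ℝ) ≤
      (Finset.range (t + 1)).sup' Finset.nonempty_range_add_one fun k => f k ω} := by
    intro ω hω
    simp only [Set.mem_setOf_eq, Finset.lt_sup'_iff] at hω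
    obtain ⟨u, hu, hσu⟩ := hω
    refine Set.mem_setOf_eq ▸ (Finset.le_sup'_iff _).2 ⟨u, hu, ?_⟩
    rw [hεs, hfA]
    exact Real.exp_le_exp.2 (mul_le_mul_of_nonneg_left hσu.le hθ.le)
  calc μ {ω | σ < (Finset.range (t + 1)).sup' Finset.nonempty_range_add_one
        (fun u => A u ω - α * u)}
      ≤ μ {ω | (ε : ℝ) ≤
        (Finset.range (t + 1)).sup' Finset.nonempty_range_add_one fun k => f k ω} :=
        measure_mono hsub
    _ ≤ (ε : ℝ≥0∞)⁻¹ := ENNReal.le_inv_iff_mul_le.2 (by rwa [mul_comm] at hμS)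
    _ = ENNReal.ofReal (Real.exp (-θ * σ)) := by
        have h1 : (ε : ℝ≥0∞) = ENNReal.ofReal (Real.exp (θ * σ)) := rfl
        rw [h1, ← ENNReal.ofReal_inv_of_pos (Real.exp_pos _), ← Real.exp_neg, neg_mul]
end

section
/- Let (s_i)_{i≥1} be i.i.d. real-valued random variables with E[e^{−θ s_1}] < ∞ for a fixed θ > 0, let S(t) = Σ_{i=1}^{t} s_i, and let β(θ) = −(1/θ) log E[e^{−θ S(1)}]. Then for every t ∈ ℕ and every σ ≥ 0, P{ max_{0 ≤ u ≤ t} ( β(θ) u − S(u) ) > σ } ≤ e^{−θ σ}. -/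
open MeasureTheory ProbabilityTheory

/-- Maximal inequality for the service process: if `(s i)` are i.i.d. with
`E[exp (−θ s 1)] < ∞` for `θ > 0`, `S t = Σ_{i<t} s i` and
`β = −(1/θ) log E[exp (−θ S 1)]`, then for every `t` and `σ ≥ 0`,
`P{ max_{0 ≤ u ≤ t} (β u − S u) > σ } ≤ exp (−θ σ)`. -/
theorem maximal_inequality_service
    {Ω : Type*} [MeasurableSpace Ω] (μ : Measure Ω) [IsProbabilityMeasure μ]
    (s : ℕ → Ω → ℝ) (hs_meas : ∀ i, Measurable (s i))
    (hs_indep : iIndepFun s μ)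
    (hs_ident : ∀ i, IdentDistrib (s i) (s 0) μ μ)
    (θ : ℝ) (hθ : 0 < θ)
    (hs_int : Integrable (fun ω => Real.exp (-θ * s 0 ω)) μ)
    (S : ℕ → Ω → ℝ) (hS : ∀ t ω, S t ω = ∑ i ∈ Finset.range t, s i ω)
    (β : ℝ) (hβ : β = -(1 / θ) * Real.log (∫ ω, Real.exp (-θ * S 1 ω) ∂μ))
    (t : ℕ) (σ : ℝ) (hσ : 0 ≤ σ) :
    μ {ω | σ < (Finset.range (t + 1)).sup' ⟨0, by simp⟩
        (fun u => β * u - S u ω)}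
      ≤ ENNReal.ofReal (Real.exp (-θ * σ)) := by
  classical
  -- notation
  set A : ℝ := ∫ ω, Real.exp (-θ * s 0 ω) ∂μ with hA
  have hA_pos : 0 < A := integral_exp_pos (f := fun ω => -θ * s 0 ω) hs_int
  have hβA : Real.exp (θ * β) = A⁻¹ := by
    have hS1 : (∫ ω, Real.exp (-θ * S 1 ω) ∂μ) = A := by
      rw [hA]; congr 1; funext ω; rw [hS]; simp
    rw [hβ, hS1]
    have h1 : θ * (-(1 / θ) * Real.log A) = -Real.log A := by
      field_simp
    rw [h1, Real.exp_neg, Real.exp_log hA_pos]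
  -- the exponential martingale
  set g : ℕ → Ω → ℝ := fun i ω => Real.exp (θ * β) * Real.exp (-θ * s i ω) with hg
  set f : ℕ → Ω → ℝ := fun n ω => Real.exp (θ * (β * n - S n ω)) with hf
  have hexp_meas : Measurable fun x : ℝ => Real.exp (-θ * x) :=
    Real.measurable_exp.comp (measurable_const.mul measurable_id)
  have hident : ∀ i, IdentDistrib (fun ω => Real.exp (-θ * s i ω))
      (fun ω => Real.exp (-θ * s 0 ω)) μ μ :=
    fun i => (hs_ident i).comp hexp_meas
  have hg_int : ∀ i, Integrable (g i) μ := fun i =>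
    (((hident i).integrable_iff).2 hs_int).const_mul _
  have hg_integral : ∀ i, ∫ ω, g i ω ∂μ = 1 := by
    intro i
    have : ∫ ω, g i ω ∂μ = Real.exp (θ * β) * ∫ ω, Real.exp (-θ * s i ω) ∂μ :=
      integral_const_mul _ _
    rw [this, (hident i).integral_eq, ← hA, hβA, inv_mul_cancel₀ hA_pos.ne']
  have hf0 : f 0 = fun _ => 1 := by
    funext ω; simp [hf, hS]
  have hf_succ : ∀ n, f (n + 1) = f n * g n := by
    intro n
    funext ω
    have hSn : S (n + 1) ω = S n ω + s n ω := by
      rw [hS, hS, Finset.sum_range_succ]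
    simp only [hf, hg, Pi.mul_apply, ← Real.exp_add]
    congr 1
    rw [hSn]; push_cast; ring
  have hf_nonneg : ∀ n ω, 0 ≤ f n ω := fun n ω => (Real.exp_pos _).le
  have hg_nonneg : ∀ n ω, 0 ≤ g n ω :=
    fun n ω => mul_nonneg (Real.exp_pos _).le (Real.exp_pos _).le
  have hSsum : ∀ n, S n = ∑ k ∈ Finset.range n, s k := by
    intro n; funext ω; rw [hS]; simp [Finset.sum_apply]
  have hφ : ∀ n, Measurable fun x : ℝ => Real.exp (θ * (β * n - x)) := fun n =>
    Real.measurable_exp.comp ((measurable_const.sub measurable_id).const_mul θ)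
  have hψ : Measurable fun x : ℝ => Real.exp (θ * β) * Real.exp (-θ * x) :=
    (hexp_meas.const_mul _)
  have hIndep_fg : ∀ n, IndepFun (f n) (g n) μ := by
    intro n
    have h1 : IndepFun (∑ k ∈ Finset.range n, s k) (s n) μ :=
      hs_indep.indepFun_sum_range_succ hs_meas n
    have h2 := h1.comp (hφ n) hψ
    have hfe : f n = (fun x : ℝ => Real.exp (θ * (β * n - x))) ∘
        (∑ k ∈ Finset.range n, s k) := by
      funext ω; simp [hf, hSsum n]
    have hge : g n = (fun x : ℝ => Real.exp (θ * β) * Real.exp (-θ * x)) ∘ s n := rfl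
    rw [hfe, hge]; exact h2
  have hf_int : ∀ n, Integrable (f n) μ ∧ (∫ ω, f n ω ∂μ) = 1 := by
    intro n
    induction n with
    | zero => rw [hf0]; simp
    | succ n ih =>
      rw [hf_succ n]
      refine ⟨(hIndep_fg n).integrable_mul ih.1 (hg_int n), ?_⟩
      have := (hIndep_fg n).integral_mul_eq_mul_integral ih.1.1 (hg_int n).1
      rw [this, ih.2, hg_integral n, one_mul]
  -- the filtration generated by s 0, ..., s (n-1)
  set 𝒢 : Filtration ℕ ‹MeasurableSpace Ω› :=
    ⟨fun n => ⨆ k ∈ {k : ℕ | k < n}, MeasurableSpace.comap (s k) inferInstance,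
      fun i j hij => biSup_mono fun k hk => lt_of_lt_of_le hk hij,
      fun n => iSup₂_le fun k _ => (hs_meas k).comap_le⟩ with h𝒢
  have h𝒢n : ∀ n, 𝒢 n = ⨆ k ∈ {k : ℕ | k < n}, MeasurableSpace.comap (s k) inferInstance :=
    fun n => rfl
  have hs_meas𝒢 : ∀ n k, k < n → Measurable[𝒢 n] (s k) := by
    intro n k hk
    rw [measurable_iff_comap_le, h𝒢n]
    exact le_iSup₂ (f := fun k (_ : k ∈ {k : ℕ | k < n}) =>
      MeasurableSpace.comap (s k) inferInstance) k hk
  have hadp : StronglyAdapted 𝒢 f := by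
    intro n
    have hSm : Measurable[𝒢 n] (S n) := by
      have heq : S n = fun ω => ∑ k ∈ Finset.range n, s k ω := funext (hS n)
      rw [heq]
      exact Finset.measurable_sum _ fun k hk =>
        hs_meas𝒢 n k (Finset.mem_range.mp hk)
    exact (Measurable.stronglyMeasurable (by
      exact Real.measurable_exp.comp ((measurable_const.sub hSm).const_mul θ)))
  have hIndep_comap : ∀ n, Indep (MeasurableSpace.comap (s n) inferInstance) (𝒢 n) μ := by
    intro n
    rw [h𝒢n]
    have : Indep (⨆ k ∈ ({n} : Set ℕ), MeasurableSpace.comap (s k) inferInstance)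
        (⨆ k ∈ {k : ℕ | k < n}, MeasurableSpace.comap (s k) inferInstance) μ := by
      refine indep_iSup_of_disjoint (fun k => (hs_meas k).comap_le) hs_indep ?_
      simp only [Set.disjoint_left, Set.mem_singleton_iff, Set.mem_setOf_eq]
      rintro k rfl
      exact lt_irrefl _
    rwa [iSup_singleton] at this
  have hg_meas_comap : ∀ n, StronglyMeasurable[MeasurableSpace.comap (s n) inferInstance]
      (g n) := by
    intro n
    exact (hψ.comp (comap_measurable (s n))).stronglyMeasurable
  have hcond_g : ∀ n, μ[g n | 𝒢 n] =ᵐ[μ] fun _ => 1 := by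
    intro n
    have := condExp_indep_eq (μ := μ) (hs_meas n).comap_le (𝒢.le n)
        (hg_meas_comap n) (hIndep_comap n)
    refine this.trans ?_
    rw [hg_integral n]
  have hmart : Martingale f 𝒢 μ := by
    refine martingale_nat hadp (fun n => (hf_int n).1) fun n => ?_
    have h1 : μ[f (n + 1) | 𝒢 n] =ᵐ[μ] f n * μ[g n | 𝒢 n] := by
      rw [hf_succ n]
      exact condExp_mul_of_stronglyMeasurable_left (hadp n)
        (by rw [← hf_succ n]; exact (hf_int (n + 1)).1) (hg_int n)
    have h2 : f n * μ[g n | 𝒢 n] =ᵐ[μ] f n := by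
      filter_upwards [hcond_g n] with ω hω
      simp [hω]
    exact (h1.trans h2).symm
  -- apply Doob's maximal inequality
  set ε : NNReal := Real.toNNReal (Real.exp (θ * σ)) with hε
  have hεr : (ε : ℝ) = Real.exp (θ * σ) := Real.coe_toNNReal _ (Real.exp_pos _).le
  have hmax := maximal_ineq (μ := μ) (hmart.submartingale)
      (fun n ω => hf_nonneg n ω) (ε := ε) t
  -- event inclusion
  have hsubset : {ω | σ < (Finset.range (t + 1)).sup' Finset.nonempty_range_add_one
        (fun u => β * u - S u ω)} ⊆
      {ω | (ε : ℝ) ≤ (Finset.range (t + 1)).sup' Finset.nonempty_range_add_one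
        fun k => f k ω} := by
    intro ω hω
    simp only [Set.mem_setOf_eq, Finset.lt_sup'_iff] at hω
    obtain ⟨u, hu, hlt⟩ := hω
    simp only [Set.mem_setOf_eq]
    refine Finset.le_sup'_of_le _ hu ?_
    rw [hεr, hf, Real.exp_le_exp]
    exact mul_le_mul_of_nonneg_left hlt.le hθ.le
  -- conclude
  have hbound : (ε : ENNReal) * μ {ω | (ε : ℝ) ≤
      (Finset.range (t + 1)).sup' Finset.nonempty_range_add_one fun k => f k ω} ≤ 1 := by
    refine le_trans hmax ?_
    have h1 : (∫ ω in {ω | (ε : ℝ) ≤ (Finset.range (t + 1)).sup'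
        Finset.nonempty_range_add_one fun k => f k ω}, f t ω ∂μ) ≤ ∫ ω, f t ω ∂μ :=
      setIntegral_le_integral (hf_int t).1 (Filter.Eventually.of_forall (hf_nonneg t))
    calc ENNReal.ofReal (∫ ω in {ω | (ε : ℝ) ≤ (Finset.range (t + 1)).sup'
          Finset.nonempty_range_add_one fun k => f k ω}, f t ω ∂μ)
        ≤ ENNReal.ofReal (∫ ω, f t ω ∂μ) := ENNReal.ofReal_le_ofReal h1
      _ = 1 := by rw [(hf_int t).2]; simp
  have hεne : (ε : ENNReal) ≠ 0 := by
    simp only [ne_eq, ENNReal.coe_eq_zero]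
    intro h
    have h0 : (0 : ℝ) = Real.exp (θ * σ) := by rw [← hεr, h]; simp
    exact (Real.exp_pos _).ne' h0.symm
  have hfinal : μ {ω | (ε : ℝ) ≤ (Finset.range (t + 1)).sup'
      Finset.nonempty_range_add_one fun k => f k ω} ≤ (ε : ENNReal)⁻¹ := by
    rw [ENNReal.le_inv_iff_mul_le]
    rw [mul_comm]
    exact hbound
  have hinv : (ε : ENNReal)⁻¹ = ENNReal.ofReal (Real.exp (-θ * σ)) := by
    have h1 : (ε : ENNReal) = ENNReal.ofReal (Real.exp (θ * σ)) := by
      rw [ENNReal.ofReal, hε]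
    rw [h1, ← ENNReal.ofReal_inv_of_pos (Real.exp_pos _), ← Real.exp_neg]
    congr 1
    ring_nf
  calc μ {ω | σ < (Finset.range (t + 1)).sup' Finset.nonempty_range_add_one
        (fun u => β * u - S u ω)}
      ≤ μ {ω | (ε : ℝ) ≤ (Finset.range (t + 1)).sup'
        Finset.nonempty_range_add_one fun k => f k ω} := measure_mono hsubset
    _ ≤ (ε : ENNReal)⁻¹ := hfinal
    _ = ENNReal.ofReal (Real.exp (-θ * σ)) := hinv
end

section
/- Let (a_i)_{i≥1} and (s_i)_{i≥1} be two mutually independent families of i.i.d. real-valued random variables, let A(t) = Σ_{i=1}^{t} a_i, S(t) = Σ_{i=1}^{t} s_i, α(θ) = (1/θ) log E[e^{θ A(1)}] and β(θ) = −(1/θ) log E[e^{−θ S(1)}]. If θ* > 0 satisfies E[e^{θ* a_1}] < ∞, E[e^{−θ* s_1}] < ∞ and α(θ*) ≤ β(θ*), then for every t ∈ ℕ and every σ ≥ 0, P{ max_{0 ≤ u ≤ t} ( A(u) − S(u) ) > σ } ≤ e^{−θ* σ}. -/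
open MeasureTheory ProbabilityTheory

private lemma indepFun_of_indep' {Ω : Type*} {m0 : MeasurableSpace Ω} {μ : Measure Ω}
    {m1 m2 : MeasurableSpace Ω}
    (h : Indep m1 m2 μ) {φ ψ : Ω → ℝ} (hφ : Measurable[m1] φ) (hψ : Measurable[m2] ψ) :
    IndepFun φ ψ μ :=
  indep_of_indep_of_le_left (indep_of_indep_of_le_right h hψ.comap_le) hφ.comap_le

/-- Maximal inequality for the difference process: if `(a i)` and `(s i)` are two mutually
independent i.i.d. families, `A t = Σ_{i<t} a i`, `S t = Σ_{i<t} s i`, and `θ* > 0` satisfies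
`α(θ*) ≤ β(θ*)` (effective bandwidth at most effective capacity), then for every `t` and
`σ ≥ 0`, `P{ max_{0 ≤ u ≤ t} (A u − S u) > σ } ≤ exp (−θ* σ)`. -/
theorem maximal_inequality_diff
    {Ω : Type*} [MeasurableSpace Ω] (μ : Measure Ω) [IsProbabilityMeasure μ]
    (a s : ℕ → Ω → ℝ)
    (ha_meas : ∀ i, Measurable (a i)) (hs_meas : ∀ i, Measurable (s i))
    (h_indep : iIndepFun (Sum.elim a s) μ)
    (ha_ident : ∀ i, IdentDistrib (a i) (a 0) μ μ)
    (hs_ident : ∀ i, IdentDistrib (s i) (s 0) μ μ)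
    (A S : ℕ → Ω → ℝ)
    (hA : ∀ t ω, A t ω = ∑ i ∈ Finset.range t, a i ω)
    (hS : ∀ t ω, S t ω = ∑ i ∈ Finset.range t, s i ω)
    (θstar : ℝ) (hθstar : 0 < θstar)
    (ha_int : Integrable (fun ω => Real.exp (θstar * a 0 ω)) μ)
    (hs_int : Integrable (fun ω => Real.exp (-θstar * s 0 ω)) μ)
    (h_stab : (1 / θstar) * Real.log (∫ ω, Real.exp (θstar * A 1 ω) ∂μ)
          ≤ -(1 / θstar) * Real.log (∫ ω, Real.exp (-θstar * S 1 ω) ∂μ))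
    (t : ℕ) (σ : ℝ) (hσ : 0 ≤ σ) :
    μ {ω | σ < (Finset.range (t + 1)).sup' Finset.nonempty_range_add_one
        (fun u => A u ω - S u ω)}
      ≤ ENNReal.ofReal (Real.exp (-θstar * σ)) := by
  classical
  set f : ℕ ⊕ ℕ → Ω → ℝ := Sum.elim a s with hf_def
  have hf_meas : ∀ i, Measurable (f i) := by rintro (i | i); exacts [ha_meas i, hs_meas i]
  -- the exponential increments and the exponential process
  set Y : ℕ → Ω → ℝ := fun k ω => Real.exp (θstar * a k ω) * Real.exp (-θstar * s k ω) with hY_def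
  set M : ℕ → Ω → ℝ := fun n ω => ∏ k ∈ Finset.range n, Y k ω with hM_def
  have hY_pos : ∀ k ω, 0 < Y k ω := fun k ω => mul_pos (Real.exp_pos _) (Real.exp_pos _)
  have hM_pos : ∀ n ω, 0 < M n ω := fun n ω => Finset.prod_pos fun k _ => hY_pos k ω
  have hM_eq : ∀ n ω, M n ω = Real.exp (θstar * (A n ω - S n ω)) := by
    intro n ω
    rw [hA, hS, ← Finset.sum_sub_distrib, Finset.mul_sum, Real.exp_sum]
    refine Finset.prod_congr rfl fun k _ => ?_
    show Real.exp (θstar * a k ω) * Real.exp (-θstar * s k ω) = _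
    rw [← Real.exp_add]
    ring_nf
  -- averages
  set ρa : ℝ := ∫ ω, Real.exp (θstar * a 0 ω) ∂μ with hρa_def
  set ρs : ℝ := ∫ ω, Real.exp (-θstar * s 0 ω) ∂μ with hρs_def
  have hρa_pos : 0 < ρa := integral_exp_pos (by simpa using ha_int)
  have hρs_pos : 0 < ρs := integral_exp_pos (by simpa using hs_int)
  set ρ : ℝ := ρa * ρs with hρ_def
  have hρ_pos : 0 < ρ := mul_pos hρa_pos hρs_pos
  have hρ_le_one : ρ ≤ 1 := by
    simp only [hA, hS, Finset.sum_range_one] at h_stab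
    rw [← hρa_def, ← hρs_def] at h_stab
    have h_stab' : (1 / θstar) * Real.log ρa ≤ (1 / θstar) * (-Real.log ρs) := by linarith
    have h1 : Real.log ρa ≤ -Real.log ρs :=
      le_of_mul_le_mul_left (by linarith) (by positivity : (0:ℝ) < 1 / θstar)
    have h2 : Real.log ρ ≤ 0 := by
      rw [hρ_def, Real.log_mul hρa_pos.ne' hρs_pos.ne']; linarith
    exact (Real.log_nonpos_iff hρ_pos.le).mp h2
  -- per-index integrability and averages
  have haint : ∀ k, Integrable (fun ω => Real.exp (θstar * a k ω)) μ := by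
    intro k
    exact (((ha_ident k).comp (Real.measurable_exp.comp (measurable_id.const_mul θstar))).integrable_iff).mpr ha_int
  have hsint : ∀ k, Integrable (fun ω => Real.exp (-θstar * s k ω)) μ := by
    intro k
    exact (((hs_ident k).comp (Real.measurable_exp.comp (measurable_id.const_mul (-θstar)))).integrable_iff).mpr hs_int
  have ha_avg : ∀ k, ∫ ω, Real.exp (θstar * a k ω) ∂μ = ρa := fun k =>
    ((ha_ident k).comp (Real.measurable_exp.comp (measurable_id.const_mul θstar))).integral_eq
  have hs_avg : ∀ k, ∫ ω, Real.exp (-θstar * s k ω) ∂μ = ρs := fun k =>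
    ((hs_ident k).comp (Real.measurable_exp.comp (measurable_id.const_mul (-θstar)))).integral_eq
  have has_indep : ∀ k, IndepFun (fun ω => Real.exp (θstar * a k ω))
      (fun ω => Real.exp (-θstar * s k ω)) μ := by
    intro k
    have h := h_indep.indepFun (show (Sum.inl k : ℕ ⊕ ℕ) ≠ Sum.inr k by simp)
    exact h.comp (Real.measurable_exp.comp (measurable_id.const_mul θstar))
      (Real.measurable_exp.comp (measurable_id.const_mul (-θstar)))
  have hYint : ∀ k, Integrable (Y k) μ := fun k =>
    (has_indep k).integrable_mul (haint k) (hsint k)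
  have hY_avg : ∀ k, ∫ ω, Y k ω ∂μ = ρ := by
    intro k
    have := (has_indep k).integral_mul_eq_mul_integral (haint k).aestronglyMeasurable (hsint k).aestronglyMeasurable
    calc ∫ ω, Y k ω ∂μ = ∫ ω, ((fun ω => Real.exp (θstar * a k ω)) *
        (fun ω => Real.exp (-θstar * s k ω))) ω ∂μ := rfl
    _ = ρ := by rw [this, ha_avg, hs_avg]
  -- the filtration
  set In : ℕ → Set (ℕ ⊕ ℕ) := fun n => Sum.inl '' Set.Iio n ∪ Sum.inr '' Set.Iio n with hIn_def
  set 𝒢 : Filtration ℕ ‹MeasurableSpace Ω› :=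
    { seq := fun n => ⨆ k ∈ In n, MeasurableSpace.comap (f k) inferInstance
      mono' := by
        intro n m hnm
        refine biSup_mono ?_
        intro k hk
        rcases hk with ⟨i, hi, rfl⟩ | ⟨i, hi, rfl⟩
        · exact Or.inl ⟨i, lt_of_lt_of_le hi hnm, rfl⟩
        · exact Or.inr ⟨i, lt_of_lt_of_le hi hnm, rfl⟩
      le' := fun n => iSup₂_le fun k _ => (hf_meas k).comap_le } with h𝒢_def
  have h𝒢n : ∀ n, 𝒢 n = ⨆ k ∈ In n, MeasurableSpace.comap (f k) inferInstance := fun n => rfl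
  have ha𝒢 : ∀ k n, k < n → Measurable[𝒢 n] (a k) := by
    intro k n hk
    have hle : MeasurableSpace.comap (f (Sum.inl k)) inferInstance ≤ 𝒢 n := by
      rw [h𝒢n]
      exact le_biSup (fun k => MeasurableSpace.comap (f k) inferInstance)
        (show Sum.inl k ∈ In n from Or.inl ⟨k, hk, rfl⟩)
    exact (comap_measurable (f (Sum.inl k))).mono hle le_rfl
  have hs𝒢 : ∀ k n, k < n → Measurable[𝒢 n] (s k) := by
    intro k n hk
    have hle : MeasurableSpace.comap (f (Sum.inr k)) inferInstance ≤ 𝒢 n := by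
      rw [h𝒢n]
      exact le_biSup (fun k => MeasurableSpace.comap (f k) inferInstance)
        (show Sum.inr k ∈ In n from Or.inr ⟨k, hk, rfl⟩)
    exact (comap_measurable (f (Sum.inr k))).mono hle le_rfl
  have hM𝒢 : ∀ n, Measurable[𝒢 n] (M n) := by
    intro n
    refine Finset.measurable_prod _ fun k hk => ?_
    have hk' := Finset.mem_range.mp hk
    exact ((Real.measurable_exp.comp ((ha𝒢 k n hk').const_mul θstar)).mul
      (Real.measurable_exp.comp ((hs𝒢 k n hk').const_mul (-θstar))))
  -- one-step independence from 𝒢 n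
  have hIndep_step : ∀ n, Indep (𝒢 n)
      (⨆ k ∈ ({Sum.inl n, Sum.inr n} : Set (ℕ ⊕ ℕ)), MeasurableSpace.comap (f k) inferInstance) μ := by
    intro n
    rw [h𝒢n]
    refine indep_iSup_of_disjoint (fun k => (hf_meas k).comap_le) h_indep ?_
    refine Set.disjoint_left.mpr ?_
    rintro k (⟨i, hi, rfl⟩ | ⟨i, hi, rfl⟩) hk2 <;>
      simp only [Set.mem_insert_iff, Set.mem_singleton_iff, Sum.inl.injEq, Sum.inr.injEq,
        reduceCtorEq, or_false, false_or] at hk2 <;> rw [Set.mem_Iio] at hi <;> omega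
  have hY𝒢' : ∀ n, Measurable[⨆ k ∈ ({Sum.inl n, Sum.inr n} : Set (ℕ ⊕ ℕ)),
      MeasurableSpace.comap (f k) inferInstance] (Y n) := by
    intro n
    have h1 : Measurable[⨆ k ∈ ({Sum.inl n, Sum.inr n} : Set (ℕ ⊕ ℕ)),
        MeasurableSpace.comap (f k) inferInstance] (a n) :=
      (comap_measurable (f (Sum.inl n))).mono (le_biSup (fun k => MeasurableSpace.comap (f k) inferInstance)
        (show Sum.inl n ∈ ({Sum.inl n, Sum.inr n} : Set (ℕ ⊕ ℕ)) from Or.inl rfl)) le_rfl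
    have h2 : Measurable[⨆ k ∈ ({Sum.inl n, Sum.inr n} : Set (ℕ ⊕ ℕ)),
        MeasurableSpace.comap (f k) inferInstance] (s n) :=
      (comap_measurable (f (Sum.inr n))).mono (le_biSup (fun k => MeasurableSpace.comap (f k) inferInstance)
        (show Sum.inr n ∈ ({Sum.inl n, Sum.inr n} : Set (ℕ ⊕ ℕ)) from Or.inr rfl)) le_rfl
    exact (Real.measurable_exp.comp (h1.const_mul θstar)).mul
      (Real.measurable_exp.comp (h2.const_mul (-θstar)))
  -- integrability of M n
  have hMint : ∀ n, Integrable (M n) μ := by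
    intro n
    induction n with
    | zero => simpa [hM_def] using (integrable_const (1 : ℝ))
    | succ n ih =>
      have hind : IndepFun (M n) (Y n) μ :=
        indepFun_of_indep' (hIndep_step n) (hM𝒢 n) (hY𝒢' n)
      have : Integrable (M n * Y n) μ := hind.integrable_mul ih (hYint n)
      have he : M (n + 1) = M n * Y n := by
        funext ω; simp [hM_def, Finset.prod_range_succ]
      rwa [he]
  -- supermartingale property
  have hadp : Adapted 𝒢 M := fun n => hM𝒢 n
  have hsup : Supermartingale M 𝒢 μ := by
    refine supermartingale_of_setIntegral_succ_le hadp.stronglyAdapted hMint ?_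
    intro n u hu
    have hu' : MeasurableSet u := 𝒢.le n u hu
    have hind : IndepFun (u.indicator (M n)) (Y n) μ :=
      indepFun_of_indep' (hIndep_step n) ((hM𝒢 n).indicator hu) (hY𝒢' n)
    have hint_ind : Integrable (u.indicator (M n)) μ := (hMint n).indicator hu'
    have hmul := hind.integral_mul_eq_mul_integral hint_ind.aestronglyMeasurable (hYint n).aestronglyMeasurable
    have he : M (n + 1) = M n * Y n := by
      funext ω; simp [hM_def, Finset.prod_range_succ]
    rw [he]
    rw [← integral_indicator hu', ← integral_indicator hu']
    have hieq : u.indicator (M n * Y n) = u.indicator (M n) * Y n := by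
      funext ω
      by_cases hω : ω ∈ u <;> simp [Set.indicator_of_mem, Set.indicator_of_notMem, hω]
    rw [hieq, hmul, hY_avg n]
    have hnn : 0 ≤ ∫ ω, u.indicator (M n) ω ∂μ := by
      refine integral_nonneg fun ω => ?_
      by_cases hω : ω ∈ u <;> simp [hω, (hM_pos n ω).le]
    calc (∫ ω, u.indicator (M n) ω ∂μ) * ρ ≤ (∫ ω, u.indicator (M n) ω ∂μ) * 1 :=
          mul_le_mul_of_nonneg_left hρ_le_one hnn
    _ = ∫ ω, u.indicator (M n) ω ∂μ := mul_one _
  -- the maximal inequality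
  set ε : ℝ := Real.exp (θstar * σ) with hε_def
  have hε_pos : 0 < ε := Real.exp_pos _
  set τ : Ω → WithTop ℕ := fun ω => (hittingBtwn M (Set.Ici ε) 0 t ω : ℕ) with hτ_def
  have hτ_st : IsStoppingTime 𝒢 τ := hadp.isStoppingTime_hittingBtwn measurableSet_Ici
  have hτ_le : ∀ ω, τ ω ≤ t := fun ω => WithTop.coe_le_coe.mpr (hittingBtwn_le ω)
  set E : Set Ω := {ω | ε ≤ (Finset.range (t + 1)).sup' Finset.nonempty_range_add_one
      fun k => M k ω} with hE_def
  have hE_meas : MeasurableSet E :=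
    measurableSet_le measurable_const
      (Finset.measurable_range_sup'' fun n _ => (hM𝒢 n).mono (𝒢.le n) le_rfl)
  have hsv_mem : ∀ ω ∈ E, ε ≤ stoppedValue M τ ω := by
    intro ω hω
    rw [hE_def, Set.mem_setOf_eq, Finset.le_sup'_iff] at hω
    obtain ⟨j, hj, hj2⟩ := hω
    rw [Finset.mem_range, Nat.lt_succ_iff] at hj
    exact stoppedValue_hittingBtwn_mem ⟨j, ⟨Nat.zero_le _, hj⟩, hj2⟩
  have hsv_int : Integrable (stoppedValue M τ) μ := integrable_stoppedValue ℕ hτ_st hMint hτ_le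
  have h1 : ε * (μ E).toReal ≤ ∫ ω in E, stoppedValue M τ ω ∂μ :=
    by have := setIntegral_ge_of_const_le hE_meas (measure_ne_top μ E) hsv_mem hsv_int.integrableOn; rwa [smul_eq_mul, mul_comm] at this
  have hsv_nonneg : 0 ≤ᵐ[μ] stoppedValue M τ :=
    Filter.Eventually.of_forall fun ω => (hM_pos _ ω).le
  have h2 : ∫ ω in E, stoppedValue M τ ω ∂μ ≤ ∫ ω, stoppedValue M τ ω ∂μ :=
    setIntegral_le_integral hsv_int hsv_nonneg
  have hsubneg : Submartingale (-M) 𝒢 μ := hsup.neg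
  have h3 := hsubneg.expected_stoppedValue_mono (isStoppingTime_const 𝒢 0) hτ_st
    (fun ω => WithTop.coe_le_coe.mpr (Nat.zero_le _)) hτ_le
  have hsv0 : stoppedValue (-M) (fun _ => WithTop.some (0 : ℕ)) = fun ω => -(M 0 ω) := rfl
  have hsvt : stoppedValue (-M) τ = fun ω => -(stoppedValue M τ ω) := rfl
  rw [hsv0, hsvt, integral_neg, integral_neg, neg_le_neg_iff] at h3
  have hM0 : ∫ ω, M 0 ω ∂μ = 1 := by simp [hM_def]
  have h4 : ε * (μ E).toReal ≤ 1 := h1.trans (h2.trans (h3.trans_eq hM0))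
  have hsubset : {ω | σ < (Finset.range (t + 1)).sup' Finset.nonempty_range_add_one
      (fun u => A u ω - S u ω)} ⊆ E := by
    intro ω hω
    rw [Set.mem_setOf_eq, Finset.lt_sup'_iff] at hω
    obtain ⟨u, hu, hu2⟩ := hω
    rw [hE_def, Set.mem_setOf_eq, Finset.le_sup'_iff]
    refine ⟨u, hu, ?_⟩
    rw [hM_eq]
    exact Real.exp_le_exp.mpr (mul_le_mul_of_nonneg_left hu2.le hθstar.le)
  refine le_trans (measure_mono hsubset) ?_
  have hμE : (μ E).toReal ≤ Real.exp (-θstar * σ) := by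
    have hee : Real.exp (-θstar * σ) = 1 / ε := by
      rw [hε_def, neg_mul, Real.exp_neg, one_div]
    rw [hee, le_div_iff₀ hε_pos]
    linarith
  exact (ENNReal.le_ofReal_iff_toReal_le (measure_ne_top μ E) (Real.exp_nonneg _)).mpr hμE
end

section
/- Let A : ℕ → ℝ and D_1, D_2 : ℕ → ℝ be functions (sample paths of arrivals and departures at two nodes in series) and let S_1, S_2 : {(u,t) : 0 ≤ u ≤ t} → ℝ be bivariate functions. If D_1(t) ≥ inf_{0 ≤ u ≤ t} { A(u) + S_1(u,t) } for all t and D_2(t) ≥ inf_{0 ≤ v ≤ t} { D_1(v) + S_2(v,t) } for all t, then D_2(t) ≥ inf_{0 ≤ u ≤ v ≤ t} { A(u) + S_1(u,v) + S_2(v,t) } for all t; i.e., the tandem of the two servers is a server with service process S_1 ⊗ S_2. -/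
/-- Concatenation of two dynamic servers (fixed sample path, discrete time): if
`D₁ t ≥ inf_{0 ≤ u ≤ t} (A u + S₁ u t)` and `D₂ t ≥ inf_{0 ≤ v ≤ t} (D₁ v + S₂ v t)`
for all `t`, then `D₂ t ≥ inf_{0 ≤ u ≤ v ≤ t} (A u + S₁ u v + S₂ v t)` for all `t`;
i.e. the tandem of the two servers is a server with service process `S₁ ⊗ S₂`. -/
theorem tandem_server_min_plus_convolution
    (A D₁ D₂ : ℕ → ℝ) (S₁ S₂ : ℕ → ℕ → ℝ)
    (h₁ : ∀ t, (Finset.range (t + 1)).inf' Finset.nonempty_range_add_one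
        (fun u => A u + S₁ u t) ≤ D₁ t)
    (h₂ : ∀ t, (Finset.range (t + 1)).inf' Finset.nonempty_range_add_one
        (fun v => D₁ v + S₂ v t) ≤ D₂ t) :
    ∀ t, (Finset.range (t + 1)).inf' Finset.nonempty_range_add_one
        (fun v => (Finset.range (v + 1)).inf' Finset.nonempty_range_add_one
          (fun u => A u + S₁ u v + S₂ v t)) ≤ D₂ t := by
  intro t
  refine le_trans ?_ (h₂ t)
  apply Finset.le_inf'
  intro v hv
  refine le_trans (Finset.inf'_le _ hv) ?_
  obtain ⟨u, hu, hmin⟩ := Finset.exists_mem_eq_inf' (Finset.nonempty_range_add_one)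
    (fun u => A u + S₁ u v)
  calc (Finset.range (v + 1)).inf' Finset.nonempty_range_add_one
        (fun u => A u + S₁ u v + S₂ v t)
      ≤ A u + S₁ u v + S₂ v t := Finset.inf'_le _ hu
    _ ≤ D₁ v + S₂ v t := by
        have : A u + S₁ u v ≤ D₁ v := hmin ▸ (h₁ v)
        linarith
end

section
/- Let F and G be nonnegative independent real random variables, and let f, g : [0,∞) → [0,∞) be nonincreasing functions with P(F > σ) ≤ f(σ) and P(G > σ) ≤ g(σ) for all σ ≥ 0. Set f̃(σ) = 1 − min(1, f(σ)) and g̃(σ) = 1 − min(1, g(σ)), and assume g̃ is right-continuous so that it induces a Lebesgue–Stieltjes measure dg̃. Then for every σ ≥ 0, P{ F + G > σ } ≤ 1 − ∫_{(0,σ]} f̃(σ − u) dg̃(u). -/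
open MeasureTheory ProbabilityTheory
open scoped ENNReal

lemma tail_aux {Ω : Type*} [MeasurableSpace Ω] (μ : Measure Ω) [IsProbabilityMeasure μ]
    (H : Ω → ℝ) (hH : Measurable H) (h : ℝ → ℝ)
    (h_tail : ∀ s : ℝ, 0 ≤ s → μ {ω | s < H ω} ≤ ENNReal.ofReal (h s))
    (a : ℝ) (ha : 0 ≤ a) (hna : 0 ≤ h a) :
    ENNReal.ofReal (1 - min 1 (h a)) ≤ (μ.map H) (Set.Iic a) := by
  rw [Measure.map_apply hH measurableSet_Iic]
  have hsm : MeasurableSet (H ⁻¹' Set.Iic a) := hH measurableSet_Iic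
  have h1 : μ {ω | a < H ω} ≤ ENNReal.ofReal (min 1 (h a)) := by
    rcases le_total 1 (h a) with hle | hle
    · rw [min_eq_left hle, ENNReal.ofReal_one]
      exact prob_le_one
    · rw [min_eq_right hle]
      exact h_tail a ha
  have hc : (H ⁻¹' Set.Iic a)ᶜ = {ω | a < H ω} := by
    ext ω; simp [not_le]
  have hsplit : μ (H ⁻¹' Set.Iic a) + μ {ω | a < H ω} = 1 := by
    rw [← hc, measure_add_measure_compl hsm, measure_univ]
  rw [ENNReal.ofReal_sub _ (le_min zero_le_one hna), ENNReal.ofReal_one]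
  rw [tsub_le_iff_right]
  calc (1 : ℝ≥0∞) = μ (H ⁻¹' Set.Iic a) + μ {ω | a < H ω} := hsplit.symm
    _ ≤ μ (H ⁻¹' Set.Iic a) + ENNReal.ofReal (min 1 (h a)) := add_le_add_right h1 _


/-- Tail bound for a sum of two independent nonnegative random variables via a
Lebesgue–Stieltjes convolution of the individual tail bounds (Lemma 4.1 of Jiang):
if `P(F > σ) ≤ f σ` and `P(G > σ) ≤ g σ` with `f, g` nonincreasing on `[0,∞)`,
`f̃ σ = 1 − min 1 (f σ)`, `g̃ σ = 1 − min 1 (g σ)` and `g̃` (extended as the right-continuous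
nondecreasing function `Gtilde`) induces a Lebesgue–Stieltjes measure, then
`P(F + G > σ) ≤ 1 − ∫_{(0,σ]} f̃(σ − u) dGtilde(u)`. -/
theorem tail_bound_sum_indep
    {Ω : Type*} [MeasurableSpace Ω] (μ : Measure Ω) [IsProbabilityMeasure μ]
    (F G : Ω → ℝ) (hF_meas : Measurable F) (hG_meas : Measurable G)
    (hF_nonneg : ∀ᵐ ω ∂μ, 0 ≤ F ω) (hG_nonneg : ∀ᵐ ω ∂μ, 0 ≤ G ω)
    (h_indep : IndepFun F G μ)
    (f g : ℝ → ℝ)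
    (hf_anti : AntitoneOn f (Set.Ici (0 : ℝ)))
    (hg_anti : AntitoneOn g (Set.Ici (0 : ℝ)))
    (hf_nonneg : ∀ σ : ℝ, 0 ≤ σ → 0 ≤ f σ)
    (hg_nonneg : ∀ σ : ℝ, 0 ≤ σ → 0 ≤ g σ)
    (hF_tail : ∀ σ : ℝ, 0 ≤ σ → μ {ω | σ < F ω} ≤ ENNReal.ofReal (f σ))
    (hG_tail : ∀ σ : ℝ, 0 ≤ σ → μ {ω | σ < G ω} ≤ ENNReal.ofReal (g σ))
    (Gtilde : StieltjesFunction ℝ) (hGtilde : ∀ σ : ℝ, 0 ≤ σ → Gtilde σ = 1 - min 1 (g σ))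
    (σ : ℝ) (hσ : 0 ≤ σ) :
    μ {ω | σ < F ω + G ω}
      ≤ ENNReal.ofReal
          (1 - ∫ u in Set.Ioc (0 : ℝ) σ, (1 - min 1 (f (σ - u))) ∂Gtilde.measure) := by
  set ν := Gtilde.measure with hν
  set μF := μ.map F with hμF
  set μG := μ.map G with hμG
  haveI : IsProbabilityMeasure μF := Measure.isProbabilityMeasure_map hF_meas.aemeasurable
  haveI : IsProbabilityMeasure μG := Measure.isProbabilityMeasure_map hG_meas.aemeasurable
  have hνIoc : ∀ a : ℝ, ν (Set.Ioc 0 a) = ENNReal.ofReal (Gtilde a - Gtilde 0) :=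
    fun a => Gtilde.measure_Ioc 0 a
  set J := ∫⁻ u in Set.Ioc (0:ℝ) σ, ENNReal.ofReal (1 - min 1 (f (σ - u))) ∂ν with hJdef
  -- J ≤ 1
  have hG0 : Gtilde 0 = 1 - min 1 (g 0) := hGtilde 0 le_rfl
  have hGσ : Gtilde σ = 1 - min 1 (g σ) := hGtilde σ hσ
  have hmass : ν (Set.Ioc 0 σ) ≤ 1 := by
    rw [hνIoc σ, hGσ, hG0]
    rw [show (1 - min 1 (g σ)) - (1 - min 1 (g 0)) = min 1 (g 0) - min 1 (g σ) by ring]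
    have h1 : min 1 (g 0) - min 1 (g σ) ≤ 1 :=
      sub_le_self _ (le_min zero_le_one (hg_nonneg σ hσ)) |>.trans (min_le_left _ _)
    calc ENNReal.ofReal (min 1 (g 0) - min 1 (g σ)) ≤ ENNReal.ofReal 1 :=
          ENNReal.ofReal_le_ofReal h1
      _ = 1 := ENNReal.ofReal_one
  have hJ_le_one : J ≤ 1 := by
    calc J ≤ ∫⁻ _ in Set.Ioc (0:ℝ) σ, 1 ∂ν := by
          apply lintegral_mono_ae
          rw [ae_restrict_iff' measurableSet_Ioc]
          filter_upwards with u hu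
          have hge : (0:ℝ) ≤ min 1 (f (σ - u)) :=
            le_min zero_le_one (hf_nonneg _ (by linarith [hu.2]))
          calc ENNReal.ofReal (1 - min 1 (f (σ - u))) ≤ ENNReal.ofReal 1 :=
                ENNReal.ofReal_le_ofReal (by linarith)
            _ = 1 := ENNReal.ofReal_one
      _ = ν (Set.Ioc 0 σ) := by rw [setLIntegral_one]
      _ ≤ 1 := hmass
  -- key comparison for ν vs μG
  have keyG : ∀ a : ℝ, ν (Set.Ioc 0 a) ≤ μG (Set.Iic a) := by
    intro a
    rcases lt_or_ge a 0 with hlt | hge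
    · rw [Set.Ioc_eq_empty (by linarith : ¬ (0:ℝ) < a), measure_empty]
      exact zero_le
    · rw [hνIoc a, hGtilde a hge, hG0]
      rw [show (1 - min 1 (g a)) - (1 - min 1 (g 0)) = min 1 (g 0) - min 1 (g a) by ring]
      calc ENNReal.ofReal (min 1 (g 0) - min 1 (g a))
          ≤ ENNReal.ofReal (1 - min 1 (g a)) :=
            ENNReal.ofReal_le_ofReal (by nlinarith [min_le_left (1:ℝ) (g 0)])
        _ ≤ μG (Set.Iic a) := tail_aux μ G hG_meas g hG_tail a hge (hg_nonneg a hge)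
  haveI : IsFiniteMeasure (ν.restrict (Set.Ioc (0:ℝ) σ)) := by
    constructor
    rw [Measure.restrict_apply_univ]
    exact lt_of_le_of_lt hmass ENNReal.one_lt_top
  -- step 1
  have step1 : J ≤ ∫⁻ u in Set.Ioc (0:ℝ) σ, μF (Set.Iic (σ - u)) ∂ν := by
    apply lintegral_mono_ae
    rw [ae_restrict_iff' measurableSet_Ioc]
    filter_upwards with u hu
    exact tail_aux μ F hF_meas f hF_tail (σ - u) (by linarith [hu.2])
      (hf_nonneg _ (by linarith [hu.2]))
  -- step 2 : Fubini swap
  set T : Set (ℝ × ℝ) := {p : ℝ × ℝ | p.2 ≤ σ - p.1} with hT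
  have hTmeas : MeasurableSet T :=
    measurableSet_le measurable_snd (measurable_const.sub measurable_fst)
  have step2 : ∫⁻ u in Set.Ioc (0:ℝ) σ, μF (Set.Iic (σ - u)) ∂ν
      = ∫⁻ x, ν (Set.Iic (σ - x) ∩ Set.Ioc 0 σ) ∂μF := by
    have h1 : ∀ u : ℝ, μF (Set.Iic (σ - u))
        = ∫⁻ x, T.indicator (fun _ => (1:ℝ≥0∞)) (u, x) ∂μF := by
      intro u
      have e : (fun x => T.indicator (fun _ => (1:ℝ≥0∞)) (u, x))
          = (Set.Iic (σ - u)).indicator (fun _ => (1:ℝ≥0∞)) := by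
        funext x
        simp [Set.indicator_apply, hT, Set.mem_Iic]
      rw [e]
      exact (lintegral_indicator_one measurableSet_Iic).symm
    have h2 : ∀ x : ℝ, (fun u => T.indicator (fun _ => (1:ℝ≥0∞)) (u, x))
        = (Set.Iic (σ - x)).indicator (fun _ => (1:ℝ≥0∞)) := by
      intro x
      funext u
      simp only [Set.indicator_apply, hT, Set.mem_setOf_eq, Set.mem_Iic]
      congr 1
      simp only [eq_iff_iff]
      constructor <;> intro h <;> linarith
    calc ∫⁻ u in Set.Ioc (0:ℝ) σ, μF (Set.Iic (σ - u)) ∂ν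
        = ∫⁻ u in Set.Ioc (0:ℝ) σ, ∫⁻ x, T.indicator (fun _ => (1:ℝ≥0∞)) (u, x) ∂μF ∂ν := by
          apply lintegral_congr; intro u; rw [h1 u]
      _ = ∫⁻ x, ∫⁻ u in Set.Ioc (0:ℝ) σ, T.indicator (fun _ => (1:ℝ≥0∞)) (u, x) ∂ν ∂μF := by
          apply lintegral_lintegral_swap
          exact (measurable_one.indicator hTmeas).aemeasurable
      _ = ∫⁻ x, ν (Set.Iic (σ - x) ∩ Set.Ioc 0 σ) ∂μF := by
          apply lintegral_congr; intro x
          rw [show (fun u => T.indicator (fun _ => (1:ℝ≥0∞)) (u, x))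
            = (Set.Iic (σ - x)).indicator (fun _ => (1:ℝ≥0∞)) from h2 x]
          exact (lintegral_indicator_one measurableSet_Iic).trans
            (by rw [Measure.restrict_apply measurableSet_Iic])
  -- step 3
  have step3 : ∀ x : ℝ, ν (Set.Iic (σ - x) ∩ Set.Ioc 0 σ) ≤ μG (Set.Iic (σ - x)) := by
    intro x
    calc ν (Set.Iic (σ - x) ∩ Set.Ioc 0 σ) ≤ ν (Set.Ioc 0 (σ - x)) := by
          apply measure_mono
          rintro u ⟨h1, h2, _⟩
          exact ⟨h2, h1⟩
      _ ≤ μG (Set.Iic (σ - x)) := keyG (σ - x)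
  -- step 4
  have hsum_meas : MeasurableSet {p : ℝ × ℝ | p.1 + p.2 ≤ σ} :=
    measurableSet_le (measurable_fst.add measurable_snd) measurable_const
  have hmap : μ.map (fun ω => (F ω, G ω)) = μF.prod μG :=
    (indepFun_iff_map_prod_eq_prod_map_map hF_meas.aemeasurable hG_meas.aemeasurable).mp
      h_indep
  have step4 : ∫⁻ x, μG (Set.Iic (σ - x)) ∂μF = μ {ω | F ω + G ω ≤ σ} := by
    calc ∫⁻ x, μG (Set.Iic (σ - x)) ∂μF
        = ∫⁻ x, μG (Prod.mk x ⁻¹' {p : ℝ × ℝ | p.1 + p.2 ≤ σ}) ∂μF := by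
          apply lintegral_congr; intro x
          congr 1
          ext y
          simp only [Set.mem_Iic, Set.mem_preimage, Set.mem_setOf_eq]
          constructor <;> intro h <;> linarith
      _ = (μF.prod μG) {p : ℝ × ℝ | p.1 + p.2 ≤ σ} := (Measure.prod_apply hsum_meas).symm
      _ = (μ.map (fun ω => (F ω, G ω))) {p : ℝ × ℝ | p.1 + p.2 ≤ σ} := by rw [hmap]
      _ = μ {ω | F ω + G ω ≤ σ} := by
          rw [Measure.map_apply (hF_meas.prodMk hG_meas) hsum_meas]
          rfl
  have hJle : J ≤ μ {ω | F ω + G ω ≤ σ} := by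
    calc J ≤ ∫⁻ u in Set.Ioc (0:ℝ) σ, μF (Set.Iic (σ - u)) ∂ν := step1
      _ = ∫⁻ x, ν (Set.Iic (σ - x) ∩ Set.Ioc 0 σ) ∂μF := step2
      _ ≤ ∫⁻ x, μG (Set.Iic (σ - x)) ∂μF := lintegral_mono step3
      _ = μ {ω | F ω + G ω ≤ σ} := step4
  -- complement identity
  have hle_meas : MeasurableSet {ω | F ω + G ω ≤ σ} :=
    measurableSet_le (hF_meas.add hG_meas) measurable_const
  have hcompl : μ {ω | σ < F ω + G ω} = 1 - μ {ω | F ω + G ω ≤ σ} := by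
    have hset : {ω | σ < F ω + G ω} = {ω | F ω + G ω ≤ σ}ᶜ := by
      ext ω; simp [not_le]
    rw [hset, measure_compl hle_meas (measure_ne_top μ _), measure_univ]
  -- I = J.toReal
  set I := ∫ u in Set.Ioc (0:ℝ) σ, (1 - min 1 (f (σ - u))) ∂ν with hIdef
  have hmono : MonotoneOn (fun u => f (σ - u)) (Set.Ioc (0:ℝ) σ) := by
    intro a ha b hb hab
    exact hf_anti (Set.mem_Ici.mpr (by linarith [hb.2])) (Set.mem_Ici.mpr (by linarith [ha.2]))
      (by linarith)
  have hf_aem : AEMeasurable (fun u => f (σ - u)) (ν.restrict (Set.Ioc (0:ℝ) σ)) :=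
    aemeasurable_restrict_of_monotoneOn measurableSet_Ioc hmono
  have hint_meas : AEStronglyMeasurable (fun u => 1 - min 1 (f (σ - u)))
      (ν.restrict (Set.Ioc (0:ℝ) σ)) :=
    (aemeasurable_const.sub (aemeasurable_const.min hf_aem)).aestronglyMeasurable
  have hI_eq : I = J.toReal := by
    rw [hIdef, integral_eq_lintegral_of_nonneg_ae
      (Filter.Eventually.of_forall fun u => by
        simp only [Pi.zero_apply, sub_nonneg]
        exact min_le_left _ _) hint_meas]
  have hJ_ne : J ≠ ⊤ := (lt_of_le_of_lt hJ_le_one ENNReal.one_lt_top).ne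
  have hfin : ENNReal.ofReal (1 - I) = 1 - J := by
    rw [ENNReal.ofReal_sub _ (by rw [hI_eq]; exact ENNReal.toReal_nonneg),
      ENNReal.ofReal_one, hI_eq, ENNReal.ofReal_toReal hJ_ne]
  calc μ {ω | σ < F ω + G ω} = 1 - μ {ω | F ω + G ω ≤ σ} := hcompl
    _ ≤ 1 - J := tsub_le_tsub_left hJle 1
    _ = ENNReal.ofReal (1 - I) := hfin.symm
end

section
/- Let F_1, …, F_n be mutually independent nonnegative real random variables and θ > 0 such that P(F_i > σ) ≤ e^{−θ σ} for every σ ≥ 0 and every i. Then for every σ ≥ 0, P{ F_1 + ⋯ + F_n > σ } ≤ e^{−θ σ} Σ_{h=0}^{n−1} (θ σ)^h / h! (the tail of the Erlang/Gamma(n, θ) distribution). -/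
open MeasureTheory ProbabilityTheory

open Finset
open scoped ENNReal

noncomputable def erlT (θ : ℝ) (n : ℕ) (u : ℝ) : ℝ :=
  Real.exp (-θ*u) * ∑ h ∈ Finset.range n, (θ*u)^h / Nat.factorial h

noncomputable def erlG (θ σ : ℝ) (n : ℕ) (s : ℝ) : ℝ :=
  θ * Real.exp (-θ*(σ-s)) * (θ*(σ-s))^(n-1) / Nat.factorial (n-1)

lemma erlT_zero (θ : ℝ) (m : ℕ) : erlT θ (m+1) 0 = 1 := by
  simp [erlT, Finset.sum_range_succ', zero_pow (Nat.succ_ne_zero _)]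

lemma erlT_nonneg (θ : ℝ) (n : ℕ) (u : ℝ) (h : 0 ≤ θ*u) : 0 ≤ erlT θ n u := by
  apply mul_nonneg (Real.exp_nonneg _)
  exact Finset.sum_nonneg fun i _ => div_nonneg (pow_nonneg h i) (Nat.cast_nonneg _)

lemma erlG_nonneg (θ σ : ℝ) (n : ℕ) (s : ℝ) (hθ : 0 ≤ θ) (hs : s ≤ σ) :
    0 ≤ erlG θ σ n s := by
  apply div_nonneg _ (Nat.cast_nonneg _)
  exact mul_nonneg (mul_nonneg hθ (Real.exp_nonneg _))
    (pow_nonneg (mul_nonneg hθ (by linarith)) _)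

lemma erlG_cont (θ σ : ℝ) (n : ℕ) : Continuous (erlG θ σ n) := by
  unfold erlG; fun_prop

lemma erlT_succ (θ : ℝ) (n : ℕ) (σ : ℝ) :
    erlT θ (n+1) σ = erlT θ n σ + Real.exp (-θ*σ) * (θ*σ)^n / Nat.factorial n := by
  simp [erlT, Finset.sum_range_succ, mul_add, mul_div_assoc]

lemma hasDerivAt_erlT (θ : ℝ) (m : ℕ) (u : ℝ) :
    HasDerivAt (erlT θ (m+1))
      (-(θ * Real.exp (-θ*u) * (θ*u)^m / Nat.factorial m)) u := by
  have hP : HasDerivAt (fun u => ∑ h ∈ Finset.range (m+1), (θ*u)^h / Nat.factorial h)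
      (θ * ∑ h ∈ Finset.range m, (θ*u)^h / Nat.factorial h) u := by
    have h1 : ∀ h : ℕ, HasDerivAt (fun u => (θ*u)^h / Nat.factorial h)
        ((h : ℝ) * (θ*u)^(h-1) * (θ*1) / Nat.factorial h) u := fun h =>
      (((hasDerivAt_id u).const_mul θ).pow h).div_const _
    have := HasDerivAt.sum (u := Finset.range (m+1)) (fun h _ => h1 h)
    convert this using 1
    · rfl
    · rfl
    · funext u; simp [Finset.sum_apply]
    rw [Finset.sum_range_succ']
    simp only [Nat.cast_zero, zero_mul, zero_div, add_zero, Finset.mul_sum]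
    apply Finset.sum_congr rfl
    intro i _
    have hfac : (Nat.factorial (i+1) : ℝ) = (i+1) * Nat.factorial i := by
      rw [Nat.factorial_succ]; push_cast; ring
    have h0 : (Nat.factorial i : ℝ) ≠ 0 := Nat.cast_ne_zero.2 (Nat.factorial_ne_zero i)
    have h1 : ((i:ℝ)+1) ≠ 0 := by positivity
    rw [hfac]
    push_cast
    field_simp
  have hE : HasDerivAt (fun u => Real.exp (-θ*u)) (Real.exp (-θ*u) * (-θ*1)) u :=
    ((hasDerivAt_id u).const_mul (-θ)).exp
  have := hE.mul hP
  convert this using 1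
  · rfl
  · rfl
  · rfl
  rw [Finset.sum_range_succ]
  have h0 : (Nat.factorial m : ℝ) ≠ 0 := Nat.cast_ne_zero.2 (Nat.factorial_ne_zero m)
  field_simp
  ring

lemma hasDerivAt_erlT_comp (θ σ : ℝ) (m : ℕ) (s : ℝ) :
    HasDerivAt (fun s => erlT θ (m+1) (σ - s)) (erlG θ σ (m+1) s) s := by
  have h1 : HasDerivAt (fun s : ℝ => σ - s) (0 - 1) s :=
    (hasDerivAt_const s σ).sub (hasDerivAt_id s)
  have := (hasDerivAt_erlT θ m (σ - s)).comp s h1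
  convert this using 1
  · rfl
  · rfl
  · rfl
  simp [erlG]

lemma hasDerivAt_erlA (θ σ : ℝ) (m : ℕ) (s : ℝ) :
    HasDerivAt (fun s => -(Real.exp (-θ*σ) * (θ*(σ-s))^(m+1) / Nat.factorial (m+1)))
      (erlG θ σ (m+1) s * Real.exp (-θ*s)) s := by
  have h1 : HasDerivAt (fun s : ℝ => θ*(σ - s)) (θ * (0 - 1)) s :=
    ((hasDerivAt_const s σ).sub (hasDerivAt_id s)).const_mul θ
  have := (((h1.pow (m+1)).const_mul (Real.exp (-θ*σ))).div_const (Nat.factorial (m+1))).neg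
  convert this using 1
  · rfl
  · rfl
  · rfl
  simp only [erlG, Nat.add_sub_cancel]
  have hfac : (Nat.factorial (m+1) : ℝ) = (m+1) * Nat.factorial m := by
    rw [Nat.factorial_succ]; push_cast; ring
  have h0 : (Nat.factorial m : ℝ) ≠ 0 := Nat.cast_ne_zero.2 (Nat.factorial_ne_zero m)
  have hexp : Real.exp (-θ*(σ-s)) * Real.exp (-θ*s) = Real.exp (-θ*σ) := by
    rw [← Real.exp_add]; ring_nf
  rw [hfac, ← hexp]
  have hm1 : ((m:ℝ)+1) ≠ 0 := by positivity
  push_cast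
  field_simp
  ring

lemma erlT_ftc (θ σ : ℝ) (m : ℕ) (y : ℝ) :
    erlT θ (m+1) (σ - y) = erlT θ (m+1) σ + ∫ s in (0:ℝ)..y, erlG θ σ (m+1) s := by
  have := intervalIntegral.integral_eq_sub_of_hasDerivAt
    (f := fun s => erlT θ (m+1) (σ - s)) (f' := erlG θ σ (m+1)) (a := 0) (b := y)
    (fun x _ => hasDerivAt_erlT_comp θ σ m x)
    ((erlG_cont θ σ (m+1)).intervalIntegrable 0 y)
  rw [this]; simp

lemma erlG_exp_ftc (θ σ : ℝ) (m : ℕ) :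
    ∫ s in (0:ℝ)..σ, erlG θ σ (m+1) s * Real.exp (-θ*s)
      = Real.exp (-θ*σ) * (θ*σ)^(m+1) / Nat.factorial (m+1) := by
  have := intervalIntegral.integral_eq_sub_of_hasDerivAt
    (f := fun s => -(Real.exp (-θ*σ) * (θ*(σ-s))^(m+1) / Nat.factorial (m+1)))
    (f' := fun s => erlG θ σ (m+1) s * Real.exp (-θ*s)) (a := 0) (b := σ)
    (fun x _ => hasDerivAt_erlA θ σ m x)
    (((erlG_cont θ σ (m+1)).mul (by fun_prop)).intervalIntegrable 0 σ)
  rw [this]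
  simp [zero_pow (Nat.succ_ne_zero m)]

lemma lint_bound (θ : ℝ) (hθ : 0 < θ) (m : ℕ) (σ : ℝ) (hσ : 0 ≤ σ)
    (ν : Measure ℝ) [IsProbabilityMeasure ν]
    (hν0 : ∀ᵐ y ∂ν, 0 ≤ y)
    (hνtail : ∀ s : ℝ, 0 ≤ s → ν (Set.Ioi s) ≤ ENNReal.ofReal (Real.exp (-θ*s)))
    (f : ℝ → ℝ≥0∞)
    (hf : ∀ y, 0 ≤ y → y ≤ σ → f y ≤ ENNReal.ofReal (erlT θ (m+1) (σ - y)))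
    (hf1 : ∀ y, f y ≤ 1) :
    ∫⁻ y, f y ∂ν ≤ ENNReal.ofReal (erlT θ (m+2) σ) := by
  set G : ℝ → ℝ≥0∞ := fun s => ENNReal.ofReal (erlG θ σ (m+1) s) with hG
  set J : ℝ → ℝ → ℝ≥0∞ :=
    fun y s => (Set.Ioo 0 σ).indicator G s * (Set.Ioi s).indicator 1 y with hJ
  have hTσ : 0 ≤ erlT θ (m+1) σ := erlT_nonneg _ _ _ (by positivity)
  -- pointwise identity: for 0 ≤ y, ofReal (erlT (σ - min y σ)) = const + ∫⁻ s, J y s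
  have hkey : ∀ y : ℝ, 0 ≤ y →
      ENNReal.ofReal (erlT θ (m+1) (σ - min y σ))
        = ENNReal.ofReal (erlT θ (m+1) σ) + ∫⁻ s, J y s := by
    intro y hy
    set c := min y σ with hc
    have hc0 : 0 ≤ c := le_min hy hσ
    have hcσ : c ≤ σ := min_le_right _ _
    have hint : ∫ s in (0:ℝ)..c, erlG θ σ (m+1) s = ∫ s in Set.Ioc 0 c, erlG θ σ (m+1) s :=
      intervalIntegral.integral_of_le hc0
    have hnn : 0 ≤ᶠ[ae (volume.restrict (Set.Ioc 0 c))] erlG θ σ (m+1) := by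
      filter_upwards [ae_restrict_mem measurableSet_Ioc] with s hs
      exact erlG_nonneg θ σ (m+1) s hθ.le (hs.2.trans hcσ)
    have hIoo : volume.restrict (Set.Ioo (0:ℝ) c) = volume.restrict (Set.Ioc 0 c) :=
      Measure.restrict_congr_set Ioo_ae_eq_Ioc
    have h1 : ENNReal.ofReal (∫ s in (0:ℝ)..c, erlG θ σ (m+1) s)
        = ∫⁻ s in Set.Ioo 0 c, G s := by
      rw [hint, ofReal_integral_eq_lintegral_ofReal
        ((erlG_cont θ σ (m+1)).integrableOn_Ioc) hnn, hIoo]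
    have h2 : ∫⁻ s in Set.Ioo 0 c, G s = ∫⁻ s, J y s := by
      rw [← lintegral_indicator measurableSet_Ioo]
      congr 1
      funext s
      by_cases hs : s ∈ Set.Ioo 0 c
      · have hs1 : s ∈ Set.Ioo 0 σ := ⟨hs.1, lt_of_lt_of_le hs.2 hcσ⟩
        have hs2 : y ∈ Set.Ioi s := lt_of_lt_of_le hs.2 (min_le_left _ _)
        simp [hJ, Set.indicator_of_mem hs, Set.indicator_of_mem hs1,
          Set.indicator_of_mem hs2]
      · rw [Set.indicator_of_notMem hs]
        simp only [Set.mem_Ioo, not_and_or, not_lt] at hs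
        rcases hs with hs | hs
        · have : s ∉ Set.Ioo 0 σ := by
            simp only [Set.mem_Ioo, not_and_or, not_lt]; exact Or.inl hs
          simp [hJ, Set.indicator_of_notMem this]
        · rcases le_or_gt y σ with hyσ | hyσ
          · have hcy : c = y := min_eq_left hyσ
            have : y ∉ Set.Ioi s := by
              simp only [Set.mem_Ioi, not_lt]; rw [← hcy]; exact hs
            simp [hJ, Set.indicator_of_notMem this]
          · have hcσ' : c = σ := min_eq_right hyσ.le
            have : s ∉ Set.Ioo 0 σ := by
              simp only [Set.mem_Ioo, not_and_or, not_lt]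
              exact Or.inr (hcσ' ▸ hs)
            simp [hJ, Set.indicator_of_notMem this]
    rw [erlT_ftc θ σ m c, ENNReal.ofReal_add hTσ, h1, h2]
    · exact intervalIntegral.integral_nonneg hc0 (fun s hs =>
        erlG_nonneg θ σ (m+1) s hθ.le (hs.2.trans hcσ))
  -- main chain
  have step1 : ∫⁻ y, f y ∂ν
      ≤ ∫⁻ y, (ENNReal.ofReal (erlT θ (m+1) σ) + ∫⁻ s, J y s) ∂ν := by
    apply lintegral_mono_ae
    filter_upwards [hν0] with y hy
    rw [← hkey y hy]
    rcases le_or_gt y σ with h | h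
    · rw [min_eq_left h]; exact hf y hy h
    · rw [min_eq_right h.le]
      simp only [sub_self, erlT_zero, ENNReal.ofReal_one]
      exact hf1 y
  have step2 : ∫⁻ y, (ENNReal.ofReal (erlT θ (m+1) σ) + ∫⁻ s, J y s) ∂ν
      = ENNReal.ofReal (erlT θ (m+1) σ) + ∫⁻ y, (∫⁻ s, J y s) ∂ν := by
    rw [lintegral_add_left measurable_const, lintegral_const, measure_univ, mul_one]
  have hmeasJ : Measurable (Function.uncurry J) := by
    have huJ : Function.uncurry J = fun p : ℝ × ℝ =>
        ((Set.Ioo 0 σ).indicator G p.2) * ({q : ℝ × ℝ | q.2 < q.1}.indicator 1 p) := by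
      funext p
      simp only [Function.uncurry, hJ]
      congr 1
    rw [huJ]
    have hGmeas : Measurable G := by
      rw [hG]; exact (ENNReal.measurable_ofReal).comp (erlG_cont θ σ (m+1)).measurable
    exact ((hGmeas.indicator measurableSet_Ioo).comp measurable_snd).mul
      (measurable_const.indicator (measurableSet_lt measurable_snd measurable_fst))
  have swap : ∫⁻ y, (∫⁻ s, J y s) ∂ν = ∫⁻ s, (∫⁻ y, J y s ∂ν) :=
    lintegral_lintegral_swap hmeasJ.aemeasurable
  have inner : ∀ s : ℝ, ∫⁻ y, J y s ∂ν = (Set.Ioo 0 σ).indicator G s * ν (Set.Ioi s) := by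
    intro s
    simp only [hJ]
    rw [lintegral_const_mul _ (measurable_one.indicator measurableSet_Ioi),
      lintegral_indicator_one measurableSet_Ioi]
  have bnd : ∫⁻ s, (Set.Ioo 0 σ).indicator G s * ν (Set.Ioi s)
      ≤ ∫⁻ s, (Set.Ioo 0 σ).indicator
          (fun s => ENNReal.ofReal (erlG θ σ (m+1) s * Real.exp (-θ*s))) s := by
    apply lintegral_mono
    intro s
    dsimp only
    by_cases hs : s ∈ Set.Ioo 0 σ
    · rw [Set.indicator_of_mem hs, Set.indicator_of_mem hs, hG,
        ENNReal.ofReal_mul (erlG_nonneg θ σ (m+1) s hθ.le hs.2.le)]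
      exact mul_le_mul_right (hνtail s hs.1.le) _
    · rw [Set.indicator_of_notMem hs, Set.indicator_of_notMem hs, zero_mul]
  have eval : ∫⁻ s, (Set.Ioo 0 σ).indicator
        (fun s => ENNReal.ofReal (erlG θ σ (m+1) s * Real.exp (-θ*s))) s
      = ENNReal.ofReal (Real.exp (-θ*σ) * (θ*σ)^(m+1) / Nat.factorial (m+1)) := by
    have hIoo : volume.restrict (Set.Ioo (0:ℝ) σ) = volume.restrict (Set.Ioc 0 σ) :=
      Measure.restrict_congr_set Ioo_ae_eq_Ioc
    have hintg : IntegrableOn (fun s => erlG θ σ (m+1) s * Real.exp (-θ*s))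
        (Set.Ioc 0 σ) volume :=
      ((erlG_cont θ σ (m+1)).mul (by fun_prop)).integrableOn_Ioc
    have hnn2 : 0 ≤ᶠ[ae (volume.restrict (Set.Ioc 0 σ))]
        (fun s => erlG θ σ (m+1) s * Real.exp (-θ*s)) := by
      filter_upwards [ae_restrict_mem measurableSet_Ioc] with s hs
      exact mul_nonneg (erlG_nonneg θ σ (m+1) s hθ.le hs.2) (Real.exp_nonneg _)
    rw [lintegral_indicator measurableSet_Ioo, hIoo,
      ← ofReal_integral_eq_lintegral_ofReal hintg hnn2,
      ← intervalIntegral.integral_of_le hσ, erlG_exp_ftc]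
  have hnn3 : 0 ≤ Real.exp (-θ*σ) * (θ*σ)^(m+1) / Nat.factorial (m+1) := by positivity
  calc ∫⁻ y, f y ∂ν
      ≤ ENNReal.ofReal (erlT θ (m+1) σ) + ∫⁻ y, (∫⁻ s, J y s) ∂ν := step1.trans step2.le
    _ = ENNReal.ofReal (erlT θ (m+1) σ) + ∫⁻ s, (∫⁻ y, J y s ∂ν) := by rw [swap]
    _ ≤ ENNReal.ofReal (erlT θ (m+1) σ)
        + ENNReal.ofReal (Real.exp (-θ*σ) * (θ*σ)^(m+1) / Nat.factorial (m+1)) := by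
        gcongr
        calc ∫⁻ s, (∫⁻ y, J y s ∂ν)
            = ∫⁻ s, (Set.Ioo 0 σ).indicator G s * ν (Set.Ioi s) := by
              exact lintegral_congr fun s => inner s
          _ ≤ _ := bnd.trans eval.le
    _ = ENNReal.ofReal (erlT θ (m+2) σ) := by
        rw [← ENNReal.ofReal_add hTσ hnn3, ← erlT_succ]

open ProbabilityTheory in
lemma pair_step {Ω : Type*} [MeasurableSpace Ω] (μ : Measure Ω) [IsProbabilityMeasure μ]
    (X Y : Ω → ℝ) (hX : Measurable X) (hY : Measurable Y)
    (hY0 : ∀ᵐ ω ∂μ, 0 ≤ Y ω) (hind : IndepFun Y X μ)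
    (θ : ℝ) (hθ : 0 < θ) (m : ℕ)
    (hXtail : ∀ σ : ℝ, 0 ≤ σ → μ {ω | σ < X ω} ≤ ENNReal.ofReal (erlT θ (m+1) σ))
    (hYtail : ∀ σ : ℝ, 0 ≤ σ → μ {ω | σ < Y ω} ≤ ENNReal.ofReal (Real.exp (-θ*σ)))
    (σ : ℝ) (hσ : 0 ≤ σ) :
    μ {ω | σ < Y ω + X ω} ≤ ENNReal.ofReal (erlT θ (m+2) σ) := by
  have hmap := (indepFun_iff_map_prod_eq_prod_map_map hY.aemeasurable hX.aemeasurable).mp hind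
  have hsopen : MeasurableSet {p : ℝ × ℝ | σ < p.1 + p.2} :=
    (isOpen_lt continuous_const (continuous_fst.add continuous_snd)).measurableSet
  have h1 : μ {ω | σ < Y ω + X ω}
      = ((μ.map Y).prod (μ.map X)) {p : ℝ × ℝ | σ < p.1 + p.2} := by
    rw [← hmap, Measure.map_apply (hY.prodMk hX) hsopen]
    rfl
  have h2 : ∀ y : ℝ, (μ.map X) (Prod.mk y ⁻¹' {p : ℝ × ℝ | σ < p.1 + p.2})
      = μ {ω | σ - y < X ω} := by
    intro y
    have hpre : Prod.mk y ⁻¹' {p : ℝ × ℝ | σ < p.1 + p.2} = Set.Ioi (σ - y) := by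
      ext x; simp [sub_lt_iff_lt_add']
    rw [hpre, Measure.map_apply hX measurableSet_Ioi]
    rfl
  rw [h1, Measure.prod_apply hsopen]
  have : IsProbabilityMeasure (μ.map Y) := Measure.isProbabilityMeasure_map hY.aemeasurable
  apply lint_bound θ hθ m σ hσ (μ.map Y)
  · exact (ae_map_iff hY.aemeasurable measurableSet_Ici).2 hY0
  · intro s hs
    rw [Measure.map_apply hY measurableSet_Ioi]
    exact hYtail s hs
  · intro y hy hyσ
    rw [h2 y]
    exact hXtail (σ - y) (by linarith)
  · intro y
    rw [h2 y]
    exact prob_le_one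



/-- Erlang tail bound for a sum of independent nonnegative random variables with
exponential tail bounds: if `P(Fᵢ > σ) ≤ exp (−θ σ)` for all `σ ≥ 0` and all `i`, and the
`Fᵢ` are mutually independent and nonnegative, then
`P(F₁ + ⋯ + Fₙ > σ) ≤ exp (−θ σ) Σ_{h=0}^{n−1} (θ σ)^h / h!`. -/
theorem erlang_tail_bound_sum
    {Ω : Type*} [MeasurableSpace Ω] (μ : Measure Ω) [IsProbabilityMeasure μ]
    (n : ℕ) (hn : 1 ≤ n)
    (F : Fin n → Ω → ℝ) (hF_meas : ∀ i, Measurable (F i))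
    (hF_nonneg : ∀ i, ∀ᵐ ω ∂μ, 0 ≤ F i ω)
    (h_indep : iIndepFun F μ)
    (θ : ℝ) (hθ : 0 < θ)
    (h_tail : ∀ i, ∀ σ : ℝ, 0 ≤ σ → μ {ω | σ < F i ω} ≤ ENNReal.ofReal (Real.exp (-θ * σ)))
    (σ : ℝ) (hσ : 0 ≤ σ) :
    μ {ω | σ < ∑ i, F i ω}
      ≤ ENNReal.ofReal
          (Real.exp (-θ * σ) * ∑ h ∈ Finset.range n, (θ * σ) ^ h / Nat.factorial h) := by
  have claim : ∀ s : Finset (Fin n), s.Nonempty → ∀ τ : ℝ, 0 ≤ τ →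
      μ {ω | τ < ∑ i ∈ s, F i ω} ≤ ENNReal.ofReal (erlT θ s.card τ) := by
    intro s
    induction s using Finset.cons_induction with
    | empty => intro h; exact absurd h (by simp)
    | cons a s ha ih =>
      intro _ τ hτ
      rcases s.eq_empty_or_nonempty with rfl | hs
      · simpa [erlT] using h_tail a τ hτ
      · have hXm : Measurable (fun ω => ∑ i ∈ s, F i ω) := by
          apply Finset.measurable_sum
          exact fun i _ => hF_meas i
        have hind : IndepFun (F a) (∑ i ∈ s, F i) μ :=
          (h_indep.indepFun_finsetSum_of_notMem hF_meas ha).symm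
        have hind' : IndepFun (F a) (fun ω => ∑ i ∈ s, F i ω) μ := by
          have : (∑ i ∈ s, F i) = fun ω => ∑ i ∈ s, F i ω := by
            funext ω; simp [Finset.sum_apply]
          rwa [this] at hind
        obtain ⟨m, hm⟩ : ∃ m, s.card = m + 1 :=
          ⟨s.card - 1, (Nat.succ_pred_eq_of_pos (Finset.card_pos.2 hs)).symm⟩
        have hsum : ∀ ω, ∑ i ∈ Finset.cons a s ha, F i ω = F a ω + ∑ i ∈ s, F i ω := by
          intro ω; rw [Finset.sum_cons]
        have := pair_step μ (fun ω => ∑ i ∈ s, F i ω) (F a) hXm (hF_meas a)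
          (hF_nonneg a) hind' θ hθ m
          (fun τ' hτ' => hm ▸ ih hs τ' hτ') (h_tail a) τ hτ
        rw [Finset.card_cons, hm]
        calc μ {ω | τ < ∑ i ∈ Finset.cons a s ha, F i ω}
            = μ {ω | τ < F a ω + ∑ i ∈ s, F i ω} := by
              congr 1; ext ω; simp only [Set.mem_setOf_eq]; rw [hsum ω]
          _ ≤ ENNReal.ofReal (erlT θ (m+2) τ) := this
          _ = ENNReal.ofReal (erlT θ (m+1+1) τ) := by norm_num
  have huniv : (Finset.univ : Finset (Fin n)).Nonempty := by
    rw [Finset.univ_nonempty_iff]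
    exact Fin.pos_iff_nonempty.mp (by omega)
  have := claim Finset.univ huniv σ hσ
  rwa [Finset.card_univ, Fintype.card_fin] at this
end

section
/- (Single-node backlog bound, Theorem 1 with H = 1.) Let (a_i)_{i≥1} and (s_i)_{i≥1} be two mutually independent families of i.i.d. nonnegative random variables, let A(u,t) = Σ_{i=u+1}^{t} a_i and S(u,t) = Σ_{i=u+1}^{t} s_i (with A(t) = A(0,t)), and let α(θ) = (1/θ) log E[e^{θ A(0,1)}] and β(θ) = −(1/θ) log E[e^{−θ S(0,1)}]. Let D be a random process satisfying, for every sample path, inf_{0 ≤ u ≤ t} { A(u) + S(u,t) } ≤ D(t) ≤ A(t) for all t. If θ* > 0 satisfies E[e^{θ* a_1}] < ∞, E[e^{−θ* s_1}] < ∞ and α(θ*) ≤ β(θ*), then the backlog B(t) = A(t) − D(t) satisfies, for every t ∈ ℕ and x ≥ 0, P{ B(t) > x } ≤ e^{−θ* x}. -/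
open MeasureTheory ProbabilityTheory
open scoped ENNReal NNReal

section AuxLemmas

variable {Ω : Type*} [MeasurableSpace Ω] {μ : Measure Ω} [IsProbabilityMeasure μ]

/-- Moment bound: `E[exp (θ (a t - s t))] ≤ 1` under the stability condition. -/
lemma aux_mgf_le_one
    (a s : ℕ → Ω → ℝ)
    (ha_meas : ∀ i, Measurable (a i)) (hs_meas : ∀ i, Measurable (s i))
    (h_indep : iIndepFun (Sum.elim a s) μ)
    (ha_ident : ∀ i, IdentDistrib (a i) (a 0) μ μ)
    (hs_ident : ∀ i, IdentDistrib (s i) (s 0) μ μ)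
    (θ : ℝ) (hθ : 0 < θ)
    (ha_int : Integrable (fun ω => Real.exp (θ * a 0 ω)) μ)
    (hs_int : Integrable (fun ω => Real.exp (-θ * s 0 ω)) μ)
    (h_stab : (1 / θ) * Real.log (∫ ω, Real.exp (θ * a 0 ω) ∂μ)
          ≤ -(1 / θ) * Real.log (∫ ω, Real.exp (-θ * s 0 ω) ∂μ))
    (t : ℕ) :
    ∫⁻ ω, ENNReal.ofReal (Real.exp (θ * (a t ω - s t ω))) ∂μ ≤ 1 := by
  have hθne : θ ≠ 0 := hθ.ne'
  set Ia := ∫ ω, Real.exp (θ * a 0 ω) ∂μ with hIa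
  set Is := ∫ ω, Real.exp (-θ * s 0 ω) ∂μ with hIs
  have hIa_pos : 0 < Ia := integral_exp_pos ha_int
  have hIs_pos : 0 < Is := integral_exp_pos hs_int
  have hlog : Real.log Ia ≤ -Real.log Is := by
    have h2 := mul_le_mul_of_nonneg_left h_stab hθ.le
    rw [show θ * (1 / θ * Real.log Ia) = Real.log Ia by field_simp,
      show θ * (-(1 / θ) * Real.log Is) = -Real.log Is by field_simp] at h2
    exact h2
  have hprod : Ia * Is ≤ 1 := by
    calc Ia * Is = Real.exp (Real.log Ia + Real.log Is) := by
          rw [Real.exp_add, Real.exp_log hIa_pos, Real.exp_log hIs_pos]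
    _ ≤ 1 := by
          rw [show (1 : ℝ) = Real.exp 0 by simp]
          exact Real.exp_le_exp.mpr (by linarith)
  have hφ : Measurable fun y : ℝ => ENNReal.ofReal (Real.exp (θ * y)) :=
    ((measurable_const_mul θ).exp).ennreal_ofReal
  have hψ : Measurable fun y : ℝ => ENNReal.ofReal (Real.exp (-θ * y)) :=
    ((measurable_const_mul (-θ)).exp).ennreal_ofReal
  have hind : IndepFun (a t) (s t) μ :=
    h_indep.indepFun (show (Sum.inl t : ℕ ⊕ ℕ) ≠ Sum.inr t by simp)
  have hind2 : IndepFun (fun ω => ENNReal.ofReal (Real.exp (θ * a t ω)))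
      (fun ω => ENNReal.ofReal (Real.exp (-θ * s t ω))) μ := hind.comp hφ hψ
  have hsplit : ∀ ω, ENNReal.ofReal (Real.exp (θ * (a t ω - s t ω)))
      = ENNReal.ofReal (Real.exp (θ * a t ω)) * ENNReal.ofReal (Real.exp (-θ * s t ω)) := by
    intro ω
    rw [← ENNReal.ofReal_mul (Real.exp_pos _).le, ← Real.exp_add]
    congr 1; ring
  have hA : ∫⁻ ω, ENNReal.ofReal (Real.exp (θ * a t ω)) ∂μ = ENNReal.ofReal Ia := by
    have h1 : ∫⁻ ω, ENNReal.ofReal (Real.exp (θ * a t ω)) ∂μ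
        = ∫⁻ y, ENNReal.ofReal (Real.exp (θ * y)) ∂(μ.map (a t)) :=
      (lintegral_map hφ (ha_meas t)).symm
    rw [h1, (ha_ident t).map_eq, lintegral_map hφ (ha_meas 0)]
    exact (ofReal_integral_eq_lintegral_ofReal ha_int
      (Filter.Eventually.of_forall fun ω => (Real.exp_pos _).le)).symm
  have hS : ∫⁻ ω, ENNReal.ofReal (Real.exp (-θ * s t ω)) ∂μ = ENNReal.ofReal Is := by
    have h1 : ∫⁻ ω, ENNReal.ofReal (Real.exp (-θ * s t ω)) ∂μ
        = ∫⁻ y, ENNReal.ofReal (Real.exp (-θ * y)) ∂(μ.map (s t)) :=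
      (lintegral_map hψ (hs_meas t)).symm
    rw [h1, (hs_ident t).map_eq, lintegral_map hψ (hs_meas 0)]
    exact (ofReal_integral_eq_lintegral_ofReal hs_int
      (Filter.Eventually.of_forall fun ω => (Real.exp_pos _).le)).symm
  calc ∫⁻ ω, ENNReal.ofReal (Real.exp (θ * (a t ω - s t ω))) ∂μ
      = ∫⁻ ω, ENNReal.ofReal (Real.exp (θ * a t ω))
          * ENNReal.ofReal (Real.exp (-θ * s t ω)) ∂μ := lintegral_congr hsplit
    _ = (∫⁻ ω, ENNReal.ofReal (Real.exp (θ * a t ω)) ∂μ)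
          * ∫⁻ ω, ENNReal.ofReal (Real.exp (-θ * s t ω)) ∂μ :=
        lintegral_mul_eq_lintegral_mul_lintegral_of_indepFun''
          (hφ.comp (ha_meas t)).aemeasurable (hψ.comp (hs_meas t)).aemeasurable hind2
    _ = ENNReal.ofReal Ia * ENNReal.ofReal Is := by rw [hA, hS]
    _ = ENNReal.ofReal (Ia * Is) := (ENNReal.ofReal_mul hIa_pos.le).symm
    _ ≤ ENNReal.ofReal 1 := ENNReal.ofReal_le_ofReal hprod
    _ = 1 := ENNReal.ofReal_one

/-- Independence of the newest increment from the past partial sums. -/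
lemma aux_indep
    (a s : ℕ → Ω → ℝ)
    (ha_meas : ∀ i, Measurable (a i)) (hs_meas : ∀ i, Measurable (s i))
    (h_indep : iIndepFun (Sum.elim a s) μ)
    (t : ℕ) :
    IndepFun (fun ω => a t ω - s t ω)
      (fun ω => (Finset.range (t + 1)).sup' Finset.nonempty_range_add_one
        (fun u => ∑ i ∈ Finset.Ico u t, (a i ω - s i ω))) μ := by
  classical
  set S : Finset (ℕ ⊕ ℕ) := {Sum.inl t, Sum.inr t} with hSdef
  set T : Finset (ℕ ⊕ ℕ) :=
    (Finset.range t).image Sum.inl ∪ (Finset.range t).image Sum.inr with hTdef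
  have hST : Disjoint S T := by
    rw [Finset.disjoint_left]
    intro z hz hzT
    simp only [hSdef, hTdef, Finset.mem_insert, Finset.mem_singleton, Finset.mem_union,
      Finset.mem_image, Finset.mem_range] at hz hzT
    rcases hz with rfl | rfl <;>
      rcases hzT with ⟨i, hi, h⟩ | ⟨i, hi, h⟩ <;> simp_all <;> omega
  have hf_meas : ∀ i : ℕ ⊕ ℕ, Measurable (Sum.elim a s i) := by
    intro i
    cases i with
    | inl j => exact ha_meas j
    | inr j => exact hs_meas j
  have base := h_indep.indepFun_finset S T hST hf_meas
  have hmemS1 : (Sum.inl t : ℕ ⊕ ℕ) ∈ S := by simp [hSdef]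
  have hmemS2 : (Sum.inr t : ℕ ⊕ ℕ) ∈ S := by simp [hSdef]
  set φ : ((i : S) → ℝ) → ℝ := fun v => v ⟨Sum.inl t, hmemS1⟩ - v ⟨Sum.inr t, hmemS2⟩
    with hφdef
  have hφ : Measurable φ := (measurable_pi_apply _).sub (measurable_pi_apply _)
  have hmemT1 : ∀ i, i < t → (Sum.inl i : ℕ ⊕ ℕ) ∈ T := by
    intro i hi; simp [hTdef, hi]
  have hmemT2 : ∀ i, i < t → (Sum.inr i : ℕ ⊕ ℕ) ∈ T := by
    intro i hi; simp [hTdef, hi]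
  set e : ℕ → ((i : T) → ℝ) → ℝ := fun i v =>
    if h : i < t then v ⟨Sum.inl i, hmemT1 i h⟩ - v ⟨Sum.inr i, hmemT2 i h⟩ else 0
    with hedef
  have he : ∀ i, Measurable (e i) := by
    intro i
    by_cases h : i < t
    · simp only [hedef, dif_pos h]
      exact (measurable_pi_apply _).sub (measurable_pi_apply _)
    · simp only [hedef, dif_neg h]
      exact measurable_const
  set ψ : ((i : T) → ℝ) → ℝ := fun v =>
    (Finset.range (t + 1)).sup' Finset.nonempty_range_add_one
      (fun u => ∑ i ∈ Finset.Ico u t, e i v) with hψdef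
  have hψ : Measurable ψ := by
    have h1 : Measurable ((Finset.range (t + 1)).sup' Finset.nonempty_range_add_one
        (fun u v => ∑ i ∈ Finset.Ico u t, e i v)) :=
      Finset.measurable_sup' _ fun u _ => Finset.measurable_sum _ fun i _ => he i
    have h2 : ψ = (Finset.range (t + 1)).sup' Finset.nonempty_range_add_one
        (fun u v => ∑ i ∈ Finset.Ico u t, e i v) :=
      funext fun v => (Finset.sup'_apply Finset.nonempty_range_add_one
        (fun u (v : (i : T) → ℝ) => ∑ i ∈ Finset.Ico u t, e i v) v).symm
    rw [h2]; exact h1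
  have key := base.comp hφ hψ
  have h2 : (fun ω => (Finset.range (t + 1)).sup' Finset.nonempty_range_add_one
        (fun u => ∑ i ∈ Finset.Ico u t, (a i ω - s i ω)))
      = ψ ∘ (fun ω (i : T) => Sum.elim a s i ω) := by
    funext ω
    simp only [Function.comp_apply, hψdef]
    refine Finset.sup'_congr _ rfl fun u _ => ?_
    refine Finset.sum_congr rfl fun i hi => ?_
    have hit : i < t := (Finset.mem_Ico.mp hi).2
    simp only [hedef, dif_pos hit]
    rfl
  rw [h2]
  exact key

/-- Maximal inequality for the backward walk, by induction on `t`. -/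
lemma walk_bound
    (a s : ℕ → Ω → ℝ)
    (ha_meas : ∀ i, Measurable (a i)) (hs_meas : ∀ i, Measurable (s i))
    (h_indep : iIndepFun (Sum.elim a s) μ)
    (ha_ident : ∀ i, IdentDistrib (a i) (a 0) μ μ)
    (hs_ident : ∀ i, IdentDistrib (s i) (s 0) μ μ)
    (θ : ℝ) (hθ : 0 < θ)
    (ha_int : Integrable (fun ω => Real.exp (θ * a 0 ω)) μ)
    (hs_int : Integrable (fun ω => Real.exp (-θ * s 0 ω)) μ)
    (h_stab : (1 / θ) * Real.log (∫ ω, Real.exp (θ * a 0 ω) ∂μ)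
          ≤ -(1 / θ) * Real.log (∫ ω, Real.exp (-θ * s 0 ω) ∂μ)) :
    ∀ (t : ℕ) (x : ℝ),
      μ {ω | x < (Finset.range (t + 1)).sup' Finset.nonempty_range_add_one
          (fun u => ∑ i ∈ Finset.Ico u t, (a i ω - s i ω))}
        ≤ ENNReal.ofReal (Real.exp (-θ * x)) := by
  intro t
  induction t with
  | zero =>
    intro x
    have hset : {ω : Ω | x < (Finset.range (0 + 1)).sup' Finset.nonempty_range_add_one
        (fun u => ∑ i ∈ Finset.Ico u 0, (a i ω - s i ω))} = {ω : Ω | x < 0} := by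
      ext ω
      simp
    rw [hset]
    rcases le_or_gt 0 x with hx | hx
    · have h0 : {ω : Ω | x < 0} = ∅ := by
        ext ω; simp only [Set.mem_setOf_eq, Set.mem_empty_iff_false, iff_false, not_lt]
        linarith
      simp [h0]
    · have h1 : {ω : Ω | x < 0} = Set.univ := by
        ext ω; simp [hx]
      rw [h1, measure_univ, show (1 : ℝ≥0∞) = ENNReal.ofReal 1 by simp]
      exact ENNReal.ofReal_le_ofReal (Real.one_le_exp (by nlinarith))
  | succ t ih =>
    intro x
    rcases lt_or_ge x 0 with hx | hx
    · calc μ _ ≤ 1 := prob_le_one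
      _ = ENNReal.ofReal 1 := by simp
      _ ≤ ENNReal.ofReal (Real.exp (-θ * x)) :=
          ENNReal.ofReal_le_ofReal (Real.one_le_exp (by nlinarith))
    · set ξ : Ω → ℝ := fun ω => a t ω - s t ω with hξdef
      set G : Ω → ℝ := fun ω => (Finset.range (t + 1)).sup' Finset.nonempty_range_add_one
        (fun u => ∑ i ∈ Finset.Ico u t, (a i ω - s i ω)) with hGdef
      have hξmeas : Measurable ξ := (ha_meas t).sub (hs_meas t)
      have hGmeas : Measurable G := by
        have h1 : Measurable ((Finset.range (t + 1)).sup' Finset.nonempty_range_add_one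
            (fun u ω => ∑ i ∈ Finset.Ico u t, (a i ω - s i ω))) :=
          Finset.measurable_sup' _ fun u _ =>
            Finset.measurable_sum _ fun i _ => (ha_meas i).sub (hs_meas i)
        have h2 : G = (Finset.range (t + 1)).sup' Finset.nonempty_range_add_one
            (fun u ω => ∑ i ∈ Finset.Ico u t, (a i ω - s i ω)) :=
          funext fun ω => (Finset.sup'_apply Finset.nonempty_range_add_one
            (fun u (ω : Ω) => ∑ i ∈ Finset.Ico u t, (a i ω - s i ω)) ω).symm
        rw [h2]; exact h1
      have hindep : IndepFun ξ G μ := aux_indep a s ha_meas hs_meas h_indep t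
      have hset : {ω : Ω | x < (Finset.range (t + 1 + 1)).sup' Finset.nonempty_range_add_one
            (fun u => ∑ i ∈ Finset.Ico u (t + 1), (a i ω - s i ω))}
          = (fun ω => (ξ ω, G ω)) ⁻¹' {p : ℝ × ℝ | x - p.1 < p.2} := by
        ext ω
        simp only [Set.mem_setOf_eq, Set.mem_preimage, Finset.lt_sup'_iff]
        constructor
        · rintro ⟨u, hu, hlt⟩
          have hu' : u < t + 2 := Finset.mem_range.mp hu
          rcases Nat.lt_succ_iff_lt_or_eq.mp hu' with h | rfl
          · have hut : u ≤ t := Nat.lt_succ_iff.mp h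
            rw [Finset.sum_Ico_succ_top hut] at hlt
            have hle := Finset.le_sup' (fun u => ∑ i ∈ Finset.Ico u t, (a i ω - s i ω))
              (Finset.mem_range.mpr (Nat.lt_succ_of_le hut))
            show x - ξ ω < G ω
            have h3 : x - ξ ω < ∑ i ∈ Finset.Ico u t, (a i ω - s i ω) := by
              simp only [hξdef]; linarith
            exact lt_of_lt_of_le h3 (le_trans hle (le_of_eq rfl))
          · rw [Finset.Ico_self, Finset.sum_empty] at hlt
            linarith
        · intro h
          have h' : ∃ u ∈ Finset.range (t + 1),
              x - ξ ω < ∑ i ∈ Finset.Ico u t, (a i ω - s i ω) := by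
            have := h
            rw [show G ω = (Finset.range (t + 1)).sup' Finset.nonempty_range_add_one
              (fun u => ∑ i ∈ Finset.Ico u t, (a i ω - s i ω)) from rfl,
              Finset.lt_sup'_iff] at this
            exact this
          obtain ⟨u, hu, hlt⟩ := h'
          have hut : u ≤ t := Nat.lt_succ_iff.mp (Finset.mem_range.mp hu)
          refine ⟨u, Finset.mem_range.mpr (Nat.lt_succ_of_lt (Finset.mem_range.mp hu)), ?_⟩
          rw [Finset.sum_Ico_succ_top hut]
          simp only [hξdef] at hlt
          linarith
      rw [hset]
      have hpair : Measurable (fun ω => (ξ ω, G ω)) := hξmeas.prodMk hGmeas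
      have hEmeas : MeasurableSet {p : ℝ × ℝ | x - p.1 < p.2} :=
        measurableSet_lt (measurable_const.sub measurable_fst) measurable_snd
      rw [← Measure.map_apply hpair hEmeas,
        (indepFun_iff_map_prod_eq_prod_map_map hξmeas.aemeasurable hGmeas.aemeasurable).mp hindep,
        Measure.prod_apply hEmeas]
      have hintmeas : Measurable fun y : ℝ => ENNReal.ofReal (Real.exp (-θ * (x - y))) :=
        (((measurable_const.sub measurable_id).const_mul (-θ)).exp).ennreal_ofReal
      have hbound : ∀ y : ℝ, (μ.map G) (Prod.mk y ⁻¹' {p : ℝ × ℝ | x - p.1 < p.2})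
          ≤ ENNReal.ofReal (Real.exp (-θ * (x - y))) := by
        intro y
        have hpre : Prod.mk y ⁻¹' {p : ℝ × ℝ | x - p.1 < p.2} = {g : ℝ | x - y < g} := rfl
        rw [hpre, Measure.map_apply hGmeas (show MeasurableSet {g : ℝ | x - y < g} from measurableSet_Ioi)]
        exact ih (x - y)
      calc ∫⁻ y, (μ.map G) (Prod.mk y ⁻¹' {p : ℝ × ℝ | x - p.1 < p.2}) ∂(μ.map ξ)
          ≤ ∫⁻ y, ENNReal.ofReal (Real.exp (-θ * (x - y))) ∂(μ.map ξ) :=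
            lintegral_mono hbound
        _ = ∫⁻ ω, ENNReal.ofReal (Real.exp (-θ * (x - ξ ω))) ∂μ :=
            lintegral_map hintmeas hξmeas
        _ = ∫⁻ ω, ENNReal.ofReal (Real.exp (-θ * x))
              * ENNReal.ofReal (Real.exp (θ * ξ ω)) ∂μ := by
            refine lintegral_congr fun ω => ?_
            rw [← ENNReal.ofReal_mul (Real.exp_pos _).le, ← Real.exp_add]
            congr 1; ring
        _ = ENNReal.ofReal (Real.exp (-θ * x))
              * ∫⁻ ω, ENNReal.ofReal (Real.exp (θ * ξ ω)) ∂μ := by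
            rw [lintegral_const_mul _ ((hξmeas.const_mul θ).exp).ennreal_ofReal]
        _ ≤ ENNReal.ofReal (Real.exp (-θ * x)) * 1 :=
            mul_le_mul_right (aux_mgf_le_one a s ha_meas hs_meas h_indep ha_ident hs_ident
              θ hθ ha_int hs_int h_stab t) _
        _ = ENNReal.ofReal (Real.exp (-θ * x)) := mul_one _

end AuxLemmas

/-- Single-node backlog bound (Theorem 1, H = 1): for a node with i.i.d. nonnegative
arrival increments `a` (cumulative `A u t = Σ_{u ≤ i < t} a i`), i.i.d. nonnegative service
increments `s` (cumulative `S u t`), the two families mutually independent, a departure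
process `D` with `A ⊗ S (t) ≤ D t ≤ A t` samplewise, and `θ* > 0` with
`α(θ*) ≤ β(θ*)`, the backlog `B t = A t − D t` satisfies
`P{ B t > x } ≤ exp (−θ* x)` for all `t` and `x ≥ 0`. -/
theorem single_node_backlog_bound
    {Ω : Type*} [MeasurableSpace Ω] (μ : Measure Ω) [IsProbabilityMeasure μ]
    (a s : ℕ → Ω → ℝ)
    (ha_meas : ∀ i, Measurable (a i)) (hs_meas : ∀ i, Measurable (s i))
    (ha_nonneg : ∀ i ω, 0 ≤ a i ω) (hs_nonneg : ∀ i ω, 0 ≤ s i ω)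
    (h_indep : iIndepFun (Sum.elim a s) μ)
    (ha_ident : ∀ i, IdentDistrib (a i) (a 0) μ μ)
    (hs_ident : ∀ i, IdentDistrib (s i) (s 0) μ μ)
    (θstar : ℝ) (hθstar : 0 < θstar)
    (ha_int : Integrable (fun ω => Real.exp (θstar * a 0 ω)) μ)
    (hs_int : Integrable (fun ω => Real.exp (-θstar * s 0 ω)) μ)
    (h_stab : (1 / θstar) * Real.log (∫ ω, Real.exp (θstar * a 0 ω) ∂μ)
          ≤ -(1 / θstar) * Real.log (∫ ω, Real.exp (-θstar * s 0 ω) ∂μ))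
    (D : ℕ → Ω → ℝ) (hD_meas : ∀ t, Measurable (D t))
    (hD_lb : ∀ ω t, (Finset.range (t + 1)).inf' Finset.nonempty_range_add_one
        (fun u => (∑ i ∈ Finset.range u, a i ω) + ∑ i ∈ Finset.Ico u t, s i ω) ≤ D t ω)
    (hD_ub : ∀ ω t, D t ω ≤ ∑ i ∈ Finset.range t, a i ω)
    (t : ℕ) (x : ℝ) (hx : 0 ≤ x) :
    μ {ω | x < (∑ i ∈ Finset.range t, a i ω) - D t ω}
      ≤ ENNReal.ofReal (Real.exp (-θstar * x)) := by
  have hsub : {ω | x < (∑ i ∈ Finset.range t, a i ω) - D t ω}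
      ⊆ {ω | x < (Finset.range (t + 1)).sup' Finset.nonempty_range_add_one
          (fun u => ∑ i ∈ Finset.Ico u t, (a i ω - s i ω))} := by
    intro ω hω
    simp only [Set.mem_setOf_eq] at hω ⊢
    obtain ⟨u, hu, hEq⟩ := Finset.exists_mem_eq_inf' Finset.nonempty_range_add_one
      (fun u => (∑ i ∈ Finset.range u, a i ω) + ∑ i ∈ Finset.Ico u t, s i ω)
    have hD := hD_lb ω t
    rw [hEq] at hD
    have hut : u ≤ t := Nat.lt_succ_iff.mp (Finset.mem_range.mp hu)
    rw [Finset.lt_sup'_iff]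
    refine ⟨u, hu, ?_⟩
    have hsum : ∑ i ∈ Finset.Ico u t, (a i ω - s i ω)
        = ((∑ i ∈ Finset.range t, a i ω) - ∑ i ∈ Finset.range u, a i ω)
          - ∑ i ∈ Finset.Ico u t, s i ω := by
      rw [Finset.sum_sub_distrib, Finset.sum_Ico_eq_sub _ hut]
    rw [hsum]
    linarith
  exact le_trans (measure_mono hsub)
    (walk_bound a s ha_meas hs_meas h_indep ha_ident hs_ident θstar hθstar
      ha_int hs_int h_stab t x)
end

section
/- (Single-node delay bound, Theorem 1 with H = 1, equation (12).) Let (a_i)_{i≥1} and (s_i)_{i≥1} be two mutually independent families of i.i.d. nonnegative random variables, let A(u,t) = Σ_{i=u+1}^{t} a_i and S(u,t) = Σ_{i=u+1}^{t} s_i (with A(t) = A(0,t)), and let α(θ) = (1/θ) log E[e^{θ A(0,1)}] and β(θ) = −(1/θ) log E[e^{−θ S(0,1)}]. Let D be a random process satisfying, for every sample path, inf_{0 ≤ u ≤ t} { A(u) + S(u,t) } ≤ D(t) ≤ A(t) for all t. If θ* > 0 satisfies E[e^{θ* a_1}] < ∞, E[e^{−θ* s_1}] < ∞ and α(θ*)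 ≤ β(θ*), then for every t ∈ ℕ and every integer d with 0 ≤ d ≤ t, P{ A(t − d) > D(t) } ≤ e^{−θ* α(θ*) d}; equivalently, the virtual delay W(t) = inf{ d ≥ 0 : A(t − d) ≤ D(t) } satisfies P{ W(t) > d } ≤ e^{−θ* α(θ*) d}. -/
open MeasureTheory ProbabilityTheory

section DelayAux

variable {Ω : Type*} [MeasurableSpace Ω] {μ : Measure Ω} {a s : ℕ → Ω → ℝ}

/-- The sup σ-algebra generated by a set of coordinates of the combined family. -/
def delayMS (a s : ℕ → Ω → ℝ) (S : Set (ℕ ⊕ ℕ)) : MeasurableSpace Ω :=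
  ⨆ i ∈ S, MeasurableSpace.comap (Sum.elim a s i) inferInstance

lemma delayMS_le (ha_meas : ∀ i, Measurable (a i)) (hs_meas : ∀ i, Measurable (s i))
    (S : Set (ℕ ⊕ ℕ)) : delayMS a s S ≤ ‹MeasurableSpace Ω› := by
  refine iSup₂_le fun i _ => ?_
  rcases i with i | i
  · exact measurable_iff_comap_le.mp (ha_meas i)
  · exact measurable_iff_comap_le.mp (hs_meas i)

lemma delayMS_indepFun
    (h_indep : iIndepFun (Sum.elim a s) μ)
    (ha_meas : ∀ i, Measurable (a i)) (hs_meas : ∀ i, Measurable (s i))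
    {S T : Set (ℕ ⊕ ℕ)} (hST : Disjoint S T) {f g : Ω → ℝ}
    (hf : Measurable[delayMS a s S] f) (hg : Measurable[delayMS a s T] g) :
    IndepFun f g μ := by
  rw [IndepFun_iff_Indep]
  have h_le : ∀ i : ℕ ⊕ ℕ,
      MeasurableSpace.comap (Sum.elim a s i) inferInstance ≤ ‹MeasurableSpace Ω› := by
    rintro (i | i)
    · exact measurable_iff_comap_le.mp (ha_meas i)
    · exact measurable_iff_comap_le.mp (hs_meas i)
  have h := indep_iSup_of_disjoint h_le ((iIndepFun_iff_iIndep _ _ _).mp h_indep) hST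
  exact indep_of_indep_of_le_left
    (indep_of_indep_of_le_right h (measurable_iff_comap_le.mp hg))
    (measurable_iff_comap_le.mp hf)

lemma delayMS_meas_a {S : Set (ℕ ⊕ ℕ)} {i : ℕ} (hi : Sum.inl i ∈ S) :
    Measurable[delayMS a s S] (a i) :=
  measurable_iff_comap_le.mpr
    (le_biSup (fun j => MeasurableSpace.comap (Sum.elim a s j) inferInstance) hi)

lemma delayMS_meas_s {S : Set (ℕ ⊕ ℕ)} {i : ℕ} (hi : Sum.inr i ∈ S) :
    Measurable[delayMS a s S] (s i) :=
  measurable_iff_comap_le.mpr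
    (le_biSup (fun j => MeasurableSpace.comap (Sum.elim a s j) inferInstance) hi)

end DelayAux

section DelayAux2
variable {Ω : Type*} [MeasurableSpace Ω] {μ : Measure Ω} {a s : ℕ → Ω → ℝ}

lemma delay_integrable_expneg (hs_meas : ∀ i, Measurable (s i))
    (hs_nonneg : ∀ i ω, 0 ≤ s i ω) {θ : ℝ} (hθ : 0 < θ) (F : Finset ℕ)
    [IsProbabilityMeasure μ] :
    Integrable (fun ω => Real.exp (-θ * ∑ i ∈ F, s i ω)) μ := by
  refine Integrable.mono' (integrable_const 1)
    ((Finset.measurable_sum F fun i _ => hs_meas i).const_mul (-θ)).exp.aestronglyMeasurable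
    (Filter.Eventually.of_forall fun ω => ?_)
  rw [Real.norm_eq_abs, abs_of_pos (Real.exp_pos _)]
  refine Real.exp_le_one_iff.mpr ?_
  have : 0 ≤ ∑ i ∈ F, s i ω := Finset.sum_nonneg fun i _ => hs_nonneg i ω
  nlinarith

lemma delay_int_y [IsProbabilityMeasure μ]
    (h_indep : iIndepFun (Sum.elim a s) μ)
    (ha_meas : ∀ i, Measurable (a i)) (hs_meas : ∀ i, Measurable (s i))
    (hs_nonneg : ∀ i ω, 0 ≤ s i ω)
    (hs_ident : ∀ i, IdentDistrib (s i) (s 0) μ μ) {θ : ℝ} (hθ : 0 < θ) :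
    ∀ m n : ℕ, ∫ ω, Real.exp (-θ * ∑ i ∈ Finset.Ico n (n + m), s i ω) ∂μ
      = (∫ ω, Real.exp (-θ * s 0 ω) ∂μ) ^ m := by
  intro m
  induction m with
  | zero => intro n; simp
  | succ m ih =>
    intro n
    have hsplit : ∀ ω : Ω, Real.exp (-θ * ∑ i ∈ Finset.Ico n (n + (m + 1)), s i ω)
        = Real.exp (-θ * ∑ i ∈ Finset.Ico n (n + m), s i ω)
          * Real.exp (-θ * s (n + m) ω) := by
      intro ω
      rw [← Real.exp_add, ← add_assoc, Finset.sum_Ico_succ_top (Nat.le_add_right n m)]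
      ring_nf
    have hindep : IndepFun (fun ω => Real.exp (-θ * ∑ i ∈ Finset.Ico n (n + m), s i ω))
        (fun ω => Real.exp (-θ * s (n + m) ω)) μ := by
      refine delayMS_indepFun h_indep ha_meas hs_meas
        (S := Sum.inr '' Set.Ico n (n + m)) (T := {Sum.inr (n + m)}) ?_ ?_ ?_
      · rw [Set.disjoint_singleton_right]
        rintro ⟨i, hi, hi'⟩
        rw [Sum.inr.injEq] at hi'
        obtain ⟨h1, h2⟩ := hi
        omega
      · refine Measurable.exp (Measurable.const_mul (Finset.measurable_sum _ fun i hi => ?_) (-θ))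
        exact delayMS_meas_s ⟨i, Set.mem_Ico.mpr (Finset.mem_Ico.mp hi), rfl⟩
      · exact Measurable.exp (Measurable.const_mul (delayMS_meas_s (Set.mem_singleton _)) (-θ))
    have h2 : ∫ ω, Real.exp (-θ * s (n + m) ω) ∂μ = ∫ ω, Real.exp (-θ * s 0 ω) ∂μ :=
      ((hs_ident (n + m)).comp ((measurable_id.const_mul (-θ)).exp)).integral_eq
    calc ∫ ω, Real.exp (-θ * ∑ i ∈ Finset.Ico n (n + (m + 1)), s i ω) ∂μ
        = ∫ ω, (fun ω => Real.exp (-θ * ∑ i ∈ Finset.Ico n (n + m), s i ω))  ω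
            * (fun ω => Real.exp (-θ * s (n + m) ω)) ω ∂μ := by
          simp_rw [hsplit]
      _ = (∫ ω, Real.exp (-θ * ∑ i ∈ Finset.Ico n (n + m), s i ω) ∂μ)
            * ∫ ω, Real.exp (-θ * s (n + m) ω) ∂μ :=
          hindep.integral_mul_eq_mul_integral
            ((Finset.measurable_sum _ fun i _ => hs_meas i).const_mul (-θ)).exp.aestronglyMeasurable
            ((hs_meas (n+m)).const_mul (-θ)).exp.aestronglyMeasurable
      _ = (∫ ω, Real.exp (-θ * s 0 ω) ∂μ) ^ (m + 1) := by rw [ih, h2]; ring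

end DelayAux2
section DelayAux3
variable {Ω : Type*} {a s : ℕ → Ω → ℝ}

/-- Backward random-walk partial sums `G k = ∑_{i ∈ [n-k, n)} (a i - s i)`. -/
def delayG (a s : ℕ → Ω → ℝ) (n : ℕ) (k : ℕ) (ω : Ω) : ℝ :=
  ∑ i ∈ Finset.Ico (n - k) n, (a i ω - s i ω)

/-- The independent threshold `y = ∑_{i ∈ [n, t)} s i`. -/
def delayY (s : ℕ → Ω → ℝ) (n t : ℕ) (ω : Ω) : ℝ := ∑ i ∈ Finset.Ico n t, s i ω

/-- The stopping condition: the walk has not yet exceeded the threshold by time `k`. -/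
def delayGood (a s : ℕ → Ω → ℝ) (n t : ℕ) (k : ℕ) (ω : Ω) : Prop :=
  ∀ l ∈ Finset.range (k + 1), delayG a s n l ω ≤ delayY s n t ω

open Classical in
/-- The stopped exponential supermartingale. -/
noncomputable def delayZ (a s : ℕ → Ω → ℝ) (θ : ℝ) (n t : ℕ) (k : ℕ) (ω : Ω) : ℝ :=
  Real.exp (-θ * delayY s n t ω) *
    ∏ j ∈ Finset.range k,
      (if delayGood a s n t j ω
        then Real.exp (θ * (a (n - j - 1) ω - s (n - j - 1) ω)) else 1)

lemma delayG_zero (n : ℕ) (ω : Ω) : delayG a s n 0 ω = 0 := by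
  simp [delayG]

lemma delayG_succ {n k : ℕ} (hk : k < n) (ω : Ω) :
    delayG a s n (k + 1) ω = (a (n - k - 1) ω - s (n - k - 1) ω) + delayG a s n k ω := by
  unfold delayG
  rw [show n - (k + 1) = n - k - 1 by omega,
    Finset.sum_eq_sum_Ico_succ_bot (by omega : n - k - 1 < n),
    show n - k - 1 + 1 = n - k by omega]

open Classical in
lemma delayZ_succ (θ : ℝ) (n t k : ℕ) (ω : Ω) :
    delayZ a s θ n t (k + 1) ω = delayZ a s θ n t k ω *
      (if delayGood a s n t k ω
        then Real.exp (θ * (a (n - k - 1) ω - s (n - k - 1) ω)) else 1) := by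
  unfold delayZ
  rw [Finset.prod_range_succ, mul_assoc]

lemma delayZ_pos (θ : ℝ) (n t k : ℕ) (ω : Ω) : 0 < delayZ a s θ n t k ω := by
  unfold delayZ
  refine mul_pos (Real.exp_pos _) (Finset.prod_pos fun j _ => ?_)
  split
  · exact Real.exp_pos _
  · exact one_pos

lemma delayZ_zero (θ : ℝ) (n t : ℕ) (ω : Ω) :
    delayZ a s θ n t 0 ω = Real.exp (-θ * delayY s n t ω) := by
  simp [delayZ]

/-- (P2) While the walk has stayed below the threshold, `Z k = exp (θ (G k − y))`. -/
lemma delayZ_of_good (θ : ℝ) {n : ℕ} (t : ℕ) :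
    ∀ k, k ≤ n → ∀ ω : Ω, delayGood a s n t k ω →
      delayZ a s θ n t k ω = Real.exp (θ * (delayG a s n k ω - delayY s n t ω)) := by
  intro k
  induction k with
  | zero =>
    intro _ ω _
    rw [delayZ_zero, delayG_zero]
    ring_nf
  | succ k ih =>
    intro hk ω hgood
    have hgoodk : delayGood a s n t k ω := by
      intro l hl
      exact hgood l (Finset.mem_range.mpr (by have := Finset.mem_range.mp hl; omega))
    rw [delayZ_succ, if_pos hgoodk, ih (by omega) ω hgoodk, ← Real.exp_add,
      delayG_succ (by omega : k < n)]
    ring_nf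

/-- (P3) Once the walk has exceeded the threshold, `Z k > 1`. -/
lemma delayZ_of_bad (hs_nonneg : ∀ i ω, 0 ≤ s i ω) {θ : ℝ} (hθ : 0 < θ) {n t : ℕ} :
    ∀ k, k ≤ n → ∀ ω : Ω, ¬ delayGood a s n t k ω → 1 < delayZ a s θ n t k ω := by
  intro k
  induction k with
  | zero =>
    intro _ ω hbad
    exact absurd (fun l hl => by
      have : l = 0 := by have := Finset.mem_range.mp hl; omega
      rw [this, delayG_zero]
      exact Finset.sum_nonneg fun i _ => hs_nonneg i ω) hbad
  | succ k ih =>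
    intro hk ω hbad
    by_cases hgoodk : delayGood a s n t k ω
    · -- the first exceedance is at time `k+1`
      have hGk : delayY s n t ω < delayG a s n (k + 1) ω := by
        by_contra h
        push_neg at h
        refine hbad fun l hl => ?_
        rcases Nat.lt_or_ge l (k + 1) with h' | h'
        · exact hgoodk l (Finset.mem_range.mpr h')
        · have : l = k + 1 := by have := Finset.mem_range.mp hl; omega
          rw [this]; exact h
      rw [delayZ_succ, if_pos hgoodk, delayZ_of_good θ t k (by omega) ω hgoodk,
        ← Real.exp_add]
      rw [show θ * (delayG a s n k ω - delayY s n t ω)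
          + θ * (a (n - k - 1) ω - s (n - k - 1) ω)
          = θ * (delayG a s n (k + 1) ω - delayY s n t ω) by
        rw [delayG_succ (by omega : k < n)]; ring]
      have : 0 < θ * (delayG a s n (k + 1) ω - delayY s n t ω) := by nlinarith
      calc (1:ℝ) = Real.exp 0 := Real.exp_zero.symm
        _ < _ := Real.exp_lt_exp.mpr this
    · have h1 : 1 < delayZ a s θ n t k ω := ih (by omega) ω hgoodk
      rw [delayZ_succ, if_neg hgoodk, mul_one]
      exact h1

end DelayAux3
section DelayAux4
variable {Ω : Type*} [MeasurableSpace Ω] {a s : ℕ → Ω → ℝ}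

/-- Indices used by the stopped process up to time `k`. -/
def delayS (n t k : ℕ) : Set (ℕ ⊕ ℕ) :=
  Sum.inl '' Set.Ico (n - k) n ∪ Sum.inr '' Set.Ico (n - k) t

lemma delayMS_meas_G {n t k l : ℕ} (hnt : n ≤ t) (hl : l ≤ k) :
    Measurable[delayMS a s (delayS n t k)] (delayG a s n l) := by
  unfold delayG
  refine Finset.measurable_sum _ fun i hi => ?_
  obtain ⟨h1, h2⟩ := Finset.mem_Ico.mp hi
  exact (delayMS_meas_a (Or.inl ⟨i, Set.mem_Ico.mpr ⟨by omega, h2⟩, rfl⟩)).sub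
    (delayMS_meas_s (Or.inr ⟨i, Set.mem_Ico.mpr ⟨by omega, by omega⟩, rfl⟩))

lemma delayMS_meas_Y {n t k : ℕ} (hnt : n ≤ t) :
    Measurable[delayMS a s (delayS n t k)] (delayY s n t) := by
  unfold delayY
  refine Finset.measurable_sum _ fun i hi => ?_
  obtain ⟨h1, h2⟩ := Finset.mem_Ico.mp hi
  exact delayMS_meas_s (Or.inr ⟨i, Set.mem_Ico.mpr ⟨by omega, h2⟩, rfl⟩)

lemma delayMS_measSet_good {n t k j : ℕ} (hnt : n ≤ t) (hj : j ≤ k) :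
    MeasurableSet[delayMS a s (delayS n t k)] {ω | delayGood a s n t j ω} := by
  have h : {ω | delayGood a s n t j ω}
      = ⋂ l ∈ Finset.range (j + 1), {ω | delayG a s n l ω ≤ delayY s n t ω} := by
    ext ω; simp [delayGood]
  rw [h]
  refine MeasurableSet.biInter (Finset.range (j + 1)).countable_toSet fun l hl => ?_
  have hlk : l ≤ k := by have := Finset.mem_range.mp hl; omega
  exact measurableSet_le (delayMS_meas_G hnt hlk) (delayMS_meas_Y hnt)

lemma delayMS_meas_Z {θ : ℝ} {n t k : ℕ} (hnt : n ≤ t) (hk : k ≤ n) :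
    Measurable[delayMS a s (delayS n t k)] (delayZ a s θ n t k) := by
  unfold delayZ
  refine Measurable.mul (Measurable.exp (Measurable.const_mul (delayMS_meas_Y hnt) (-θ)))
    (Finset.measurable_prod _ fun j hj => ?_)
  have hjk : j < k := Finset.mem_range.mp hj
  refine Measurable.ite (delayMS_measSet_good hnt (by omega)) ?_ measurable_const
  refine Measurable.exp (Measurable.const_mul (Measurable.sub ?_ ?_) θ)
  · exact delayMS_meas_a (Or.inl ⟨n - j - 1, Set.mem_Ico.mpr ⟨by omega, by omega⟩, rfl⟩)
  · exact delayMS_meas_s (Or.inr ⟨n - j - 1, Set.mem_Ico.mpr ⟨by omega, by omega⟩, rfl⟩)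

open Classical in
/-- The stopped process restricted to the event that no exceedance has occurred. -/
noncomputable def delayW (a s : ℕ → Ω → ℝ) (θ : ℝ) (n t k : ℕ) (ω : Ω) : ℝ :=
  if delayGood a s n t k ω then delayZ a s θ n t k ω else 0

lemma delayMS_meas_W {θ : ℝ} {n t k : ℕ} (hnt : n ≤ t) (hk : k ≤ n) :
    Measurable[delayMS a s (delayS n t k)] (delayW a s θ n t k) := by
  unfold delayW
  exact Measurable.ite (delayMS_measSet_good hnt le_rfl) (delayMS_meas_Z hnt hk)
    measurable_const

end DelayAux4
section DelayAux5
variable {Ω : Type*} [MeasurableSpace Ω] {μ : Measure Ω} {a s : ℕ → Ω → ℝ}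

lemma delayZ_integral_le [IsProbabilityMeasure μ]
    (h_indep : iIndepFun (Sum.elim a s) μ)
    (ha_meas : ∀ i, Measurable (a i)) (hs_meas : ∀ i, Measurable (s i))
    (hs_nonneg : ∀ i ω, 0 ≤ s i ω)
    (ha_ident : ∀ i, IdentDistrib (a i) (a 0) μ μ)
    (hs_ident : ∀ i, IdentDistrib (s i) (s 0) μ μ)
    {θ : ℝ} (hθ : 0 < θ)
    (ha_int : Integrable (fun ω => Real.exp (θ * a 0 ω)) μ)
    (hMaMs : (∫ ω, Real.exp (θ * a 0 ω) ∂μ) * (∫ ω, Real.exp (-θ * s 0 ω) ∂μ) ≤ 1)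
    {n t : ℕ} (hnt : n ≤ t) :
    ∀ k, k ≤ n → Integrable (delayZ a s θ n t k) μ ∧
      ∫ ω, delayZ a s θ n t k ω ∂μ ≤ (∫ ω, Real.exp (-θ * s 0 ω) ∂μ) ^ (t - n) := by
  intro k
  induction k with
  | zero =>
    intro _
    have heq : delayZ a s θ n t 0
        = fun ω => Real.exp (-θ * ∑ i ∈ Finset.Ico n t, s i ω) := by
      funext ω; rw [delayZ_zero]; rfl
    constructor
    · rw [heq]; exact delay_integrable_expneg hs_meas hs_nonneg hθ _
    · rw [heq]
      have h := delay_int_y h_indep ha_meas hs_meas hs_nonneg hs_ident hθ (t - n) n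
      rw [Nat.add_sub_cancel' hnt] at h
      rw [h]
  | succ k ih =>
    intro hk
    obtain ⟨hZint, hZle⟩ := ih (by omega)
    set m := n - k - 1 with hm
    set F : Ω → ℝ := fun ω => Real.exp (θ * (a m ω - s m ω)) with hFdef
    set W : Ω → ℝ := delayW a s θ n t k with hWdef
    -- the basic one-step decomposition
    have heq2 : delayZ a s θ n t (k + 1) = (delayZ a s θ n t k - W) + W * F := by
      funext ω
      simp only [Pi.add_apply, Pi.sub_apply, Pi.mul_apply]
      rw [delayZ_succ]
      rw [hWdef]; unfold delayW
      by_cases h : delayGood a s n t k ω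
      · rw [if_pos h, if_pos h, hFdef]; ring
      · rw [if_neg h, if_neg h]; ring
    have hWmeas : Measurable W :=
      (delayMS_meas_W hnt (by omega)).mono (delayMS_le ha_meas hs_meas _) le_rfl
    have hWnonneg : ∀ ω, 0 ≤ W ω := by
      intro ω; rw [hWdef]; unfold delayW
      split
      · exact (delayZ_pos θ n t k ω).le
      · exact le_rfl
    have hWint : Integrable W μ := by
      refine hZint.mono' hWmeas.aestronglyMeasurable (Filter.Eventually.of_forall fun ω => ?_)
      rw [Real.norm_eq_abs, abs_of_nonneg (hWnonneg ω), hWdef]; unfold delayW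
      split
      · exact le_rfl
      · exact (delayZ_pos θ n t k ω).le
    -- moments of the independent factor F
    have hams_indep : IndepFun (fun ω => Real.exp (θ * a m ω))
        (fun ω => Real.exp (-θ * s m ω)) μ := by
      refine delayMS_indepFun h_indep ha_meas hs_meas
        (S := {Sum.inl m}) (T := {Sum.inr m}) (by simp) ?_ ?_
      · exact Measurable.exp (Measurable.const_mul (delayMS_meas_a (Set.mem_singleton _)) θ)
      · exact Measurable.exp (Measurable.const_mul (delayMS_meas_s (Set.mem_singleton _)) (-θ))
    have ha_int_m : Integrable (fun ω => Real.exp (θ * a m ω)) μ :=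
      (((ha_ident m).comp ((measurable_id.const_mul θ).exp)).integrable_iff).mpr ha_int
    have hs_int_m : Integrable (fun ω => Real.exp (-θ * s m ω)) μ := by
      refine Integrable.mono' (integrable_const 1)
        ((hs_meas m).const_mul (-θ)).exp.aestronglyMeasurable
        (Filter.Eventually.of_forall fun ω => ?_)
      rw [Real.norm_eq_abs, abs_of_pos (Real.exp_pos _)]
      refine Real.exp_le_one_iff.mpr ?_
      have := hs_nonneg m ω; nlinarith
    have hFeq : F = (fun ω => Real.exp (θ * a m ω)) * (fun ω => Real.exp (-θ * s m ω)) := by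
      funext ω
      rw [hFdef]
      simp only [Pi.mul_apply]
      rw [← Real.exp_add]
      ring_nf
    have hFint : Integrable F μ := by
      rw [hFeq]; exact hams_indep.integrable_mul ha_int_m hs_int_m
    have hFval : ∫ ω, F ω ∂μ
        = (∫ ω, Real.exp (θ * a 0 ω) ∂μ) * ∫ ω, Real.exp (-θ * s 0 ω) ∂μ := by
      have h1 : ∫ ω, Real.exp (θ * a m ω) ∂μ = ∫ ω, Real.exp (θ * a 0 ω) ∂μ :=
        ((ha_ident m).comp ((measurable_id.const_mul θ).exp)).integral_eq
      have h2 : ∫ ω, Real.exp (-θ * s m ω) ∂μ = ∫ ω, Real.exp (-θ * s 0 ω) ∂μ :=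
        ((hs_ident m).comp ((measurable_id.const_mul (-θ)).exp)).integral_eq
      calc ∫ ω, F ω ∂μ
          = ∫ ω, ((fun ω => Real.exp (θ * a m ω)) * fun ω => Real.exp (-θ * s m ω)) ω ∂μ := by
            rw [hFeq]
        _ = (∫ ω, Real.exp (θ * a m ω) ∂μ) * ∫ ω, Real.exp (-θ * s m ω) ∂μ :=
            hams_indep.integral_mul_eq_mul_integral ((ha_meas m).const_mul θ).exp.aestronglyMeasurable
              ((hs_meas m).const_mul (-θ)).exp.aestronglyMeasurable
        _ = _ := by rw [h1, h2]
    have hFle : ∫ ω, F ω ∂μ ≤ 1 := by rw [hFval]; exact hMaMs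
    -- independence of the stopped past and the new increment
    have hWFindep : IndepFun W F μ := by
      refine delayMS_indepFun h_indep ha_meas hs_meas
        (S := delayS n t k) (T := {Sum.inl m} ∪ {Sum.inr m}) ?_
        (delayMS_meas_W hnt (by omega)) ?_
      · rw [Set.disjoint_left]
        rintro x (⟨i, hi, rfl⟩ | ⟨i, hi, rfl⟩) hx <;>
          obtain ⟨h1, h2⟩ := hi <;>
          rcases hx with hx | hx <;>
          simp [hm] at hx <;>
          omega
      · refine Measurable.exp (Measurable.const_mul (Measurable.sub ?_ ?_) θ)
        · exact delayMS_meas_a (Or.inl (Set.mem_singleton _))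
        · exact delayMS_meas_s (Or.inr (Set.mem_singleton _))
    have hWFint : Integrable (W * F) μ := hWFindep.integrable_mul hWint hFint
    have hWFval : ∫ ω, (W * F) ω ∂μ = (∫ ω, W ω ∂μ) * ∫ ω, F ω ∂μ :=
      hWFindep.integral_mul_eq_mul_integral hWmeas.aestronglyMeasurable
        (hFint.aestronglyMeasurable)
    have hWpos : 0 ≤ ∫ ω, W ω ∂μ := integral_nonneg hWnonneg
    constructor
    · rw [heq2]; exact (hZint.sub hWint).add hWFint
    · have hint : ∫ ω, delayZ a s θ n t (k + 1) ω ∂μ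
          = (∫ ω, delayZ a s θ n t k ω ∂μ - ∫ ω, W ω ∂μ)
            + (∫ ω, W ω ∂μ) * ∫ ω, F ω ∂μ := by
        rw [heq2]
        rw [integral_add' (hZint.sub hWint) hWFint, integral_sub' hZint hWint, hWFval]
      rw [hint]
      have : (∫ ω, W ω ∂μ) * ∫ ω, F ω ∂μ ≤ ∫ ω, W ω ∂μ := by nlinarith
      linarith

end DelayAux5
/-- Single-node delay bound (Theorem 1, H = 1, equation (12)): in the setting of a single
node with i.i.d. nonnegative arrival increments `a`, i.i.d. nonnegative service increments
`s` (mutually independent families), a departure process `D` with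
`A ⊗ S (t) ≤ D t ≤ A t` samplewise, and `θ* > 0` with `α(θ*) ≤ β(θ*)`, the virtual delay
satisfies `P{ W t > d } = P{ A (t − d) > D t } ≤ exp (−θ* α(θ*) d)` for `0 ≤ d ≤ t`. -/
theorem single_node_delay_bound
    {Ω : Type*} [MeasurableSpace Ω] (μ : Measure Ω) [IsProbabilityMeasure μ]
    (a s : ℕ → Ω → ℝ)
    (ha_meas : ∀ i, Measurable (a i)) (hs_meas : ∀ i, Measurable (s i))
    (ha_nonneg : ∀ i ω, 0 ≤ a i ω) (hs_nonneg : ∀ i ω, 0 ≤ s i ω)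
    (h_indep : iIndepFun (Sum.elim a s) μ)
    (ha_ident : ∀ i, IdentDistrib (a i) (a 0) μ μ)
    (hs_ident : ∀ i, IdentDistrib (s i) (s 0) μ μ)
    (θstar : ℝ) (hθstar : 0 < θstar)
    (ha_int : Integrable (fun ω => Real.exp (θstar * a 0 ω)) μ)
    (hs_int : Integrable (fun ω => Real.exp (-θstar * s 0 ω)) μ)
    (α : ℝ) (hα : α = (1 / θstar) * Real.log (∫ ω, Real.exp (θstar * a 0 ω) ∂μ))
    (h_stab : α ≤ -(1 / θstar) * Real.log (∫ ω, Real.exp (-θstar * s 0 ω) ∂μ))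
    (D : ℕ → Ω → ℝ) (hD_meas : ∀ t, Measurable (D t))
    (hD_lb : ∀ ω t, (Finset.range (t + 1)).inf' ⟨0, Finset.mem_range.mpr (Nat.succ_pos t)⟩
        (fun u => (∑ i ∈ Finset.range u, a i ω) + ∑ i ∈ Finset.Ico u t, s i ω) ≤ D t ω)
    (hD_ub : ∀ ω t, D t ω ≤ ∑ i ∈ Finset.range t, a i ω)
    (t d : ℕ) (hd : d ≤ t) :
    μ {ω | D t ω < ∑ i ∈ Finset.range (t - d), a i ω}
      ≤ ENNReal.ofReal (Real.exp (-θstar * α * d)) := by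
  set n := t - d with hn
  have hnt : n ≤ t := Nat.sub_le t d
  set Ma := ∫ ω, Real.exp (θstar * a 0 ω) ∂μ with hMa
  set Ms := ∫ ω, Real.exp (-θstar * s 0 ω) ∂μ with hMs
  -- basic facts about the moment generating values
  have hMa1 : 1 ≤ Ma := by
    have h1 : (1 : ℝ) = ∫ _ω, (1 : ℝ) ∂μ := by simp
    rw [hMa, h1]
    refine integral_mono (integrable_const 1) ha_int fun ω => ?_
    calc (1 : ℝ) = Real.exp 0 := Real.exp_zero.symm
      _ ≤ Real.exp (θstar * a 0 ω) :=
        Real.exp_le_exp.mpr (mul_nonneg hθstar.le (ha_nonneg 0 ω))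
  have hMs_pos : 0 < Ms := by
    rw [hMs]
    rw [integral_pos_iff_support_of_nonneg (fun ω => (Real.exp_pos _).le) hs_int]
    have hsupp : (Function.support fun ω => Real.exp (-θstar * s 0 ω)) = Set.univ := by
      ext ω; simp [Function.mem_support, Real.exp_ne_zero]
    rw [hsupp]
    simp
  have hlogMa : Real.log Ma = θstar * α := by
    rw [hα]; field_simp
  have hMs_le : Ms ≤ Real.exp (-(θstar * α)) := by
    have h1 : θstar * α ≤ -Real.log Ms := by
      have := mul_le_mul_of_nonneg_left h_stab hθstar.le
      calc θstar * α ≤ θstar * (-(1 / θstar) * Real.log Ms) := this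
        _ = -Real.log Ms := by field_simp
    calc Ms = Real.exp (Real.log Ms) := (Real.exp_log hMs_pos).symm
      _ ≤ Real.exp (-(θstar * α)) := Real.exp_le_exp.mpr (by linarith)
  have hMa_eq : Ma = Real.exp (θstar * α) := by
    rw [← hlogMa, Real.exp_log (by linarith : (0:ℝ) < Ma)]
  have hMaMs : Ma * Ms ≤ 1 := by
    calc Ma * Ms ≤ Real.exp (θstar * α) * Real.exp (-(θstar * α)) := by
          rw [hMa_eq]
          exact mul_le_mul_of_nonneg_left hMs_le (Real.exp_pos _).le
      _ = 1 := by rw [← Real.exp_add]; simp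
  -- the stopped supermartingale bound
  obtain ⟨hZint, hZle⟩ := delayZ_integral_le h_indep ha_meas hs_meas hs_nonneg ha_ident
    hs_ident hθstar ha_int hMaMs hnt n le_rfl
  -- the bad event is contained in `{1 ≤ Z n}`
  have hsub : {ω | D t ω < ∑ i ∈ Finset.range n, a i ω}
      ⊆ {ω | 1 ≤ delayZ a s θstar n t n ω} := by
    intro ω hω
    have hlt : (Finset.range (t + 1)).inf' ⟨0, Finset.mem_range.mpr (Nat.succ_pos t)⟩
        (fun u => (∑ i ∈ Finset.range u, a i ω) + ∑ i ∈ Finset.Ico u t, s i ω)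
        < ∑ i ∈ Finset.range n, a i ω := lt_of_le_of_lt (hD_lb ω t) hω
    obtain ⟨u, hu, hlt⟩ := (Finset.inf'_lt_iff _).mp hlt
    have hun : u < n := by
      by_contra h
      push_neg at h
      have h1 : ∑ i ∈ Finset.range n, a i ω ≤ ∑ i ∈ Finset.range u, a i ω :=
        Finset.sum_le_sum_of_subset_of_nonneg
          (Finset.range_subset_range.mpr h) (fun i _ _ => ha_nonneg i ω)
      have h2 : 0 ≤ ∑ i ∈ Finset.Ico u t, s i ω :=
        Finset.sum_nonneg fun i _ => hs_nonneg i ω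
      linarith
    have hA : ∑ i ∈ Finset.range u, a i ω + ∑ i ∈ Finset.Ico u n, a i ω
        = ∑ i ∈ Finset.range n, a i ω := by
      simp only [Finset.range_eq_Ico]
      exact Finset.sum_Ico_consecutive _ (Nat.zero_le u) hun.le
    have hS : ∑ i ∈ Finset.Ico u n, s i ω + ∑ i ∈ Finset.Ico n t, s i ω
        = ∑ i ∈ Finset.Ico u t, s i ω :=
      Finset.sum_Ico_consecutive _ hun.le hnt
    have hG : delayG a s n (n - u) ω = ∑ i ∈ Finset.Ico u n, (a i ω - s i ω) := by
      unfold delayG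
      rw [show n - (n - u) = u by omega]
    have hGy : delayY s n t ω < delayG a s n (n - u) ω := by
      rw [hG, Finset.sum_sub_distrib]
      unfold delayY
      linarith
    have hbad : ¬ delayGood a s n t n ω := fun h =>
      absurd (h (n - u) (Finset.mem_range.mpr (by omega))) (not_le.mpr hGy)
    exact (delayZ_of_bad hs_nonneg hθstar n le_rfl ω hbad).le
  -- Markov's inequality
  have hZnonneg : 0 ≤ᵐ[μ] delayZ a s θstar n t n :=
    Filter.Eventually.of_forall fun ω => (delayZ_pos θstar n t n ω).le
  have hmarkov := mul_meas_ge_le_integral_of_nonneg hZnonneg hZint 1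
  rw [one_mul] at hmarkov
  calc μ {ω | D t ω < ∑ i ∈ Finset.range n, a i ω}
      ≤ μ {ω | 1 ≤ delayZ a s θstar n t n ω} := measure_mono hsub
    _ ≤ ENNReal.ofReal (Real.exp (-θstar * α * d)) := by
        rw [← ENNReal.ofReal_toReal (measure_ne_top μ {ω | 1 ≤ delayZ a s θstar n t n ω})]
        refine ENNReal.ofReal_le_ofReal ?_
        have hfin : Ms ^ (t - n) ≤ Real.exp (-θstar * α * d) := by
          have h1 : Ms ^ (t - n) ≤ Real.exp (-(θstar * α)) ^ (t - n) :=
            pow_le_pow_left₀ hMs_pos.le hMs_le _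
          have h2 : t - n = d := by omega
          rw [h2] at h1
          calc Ms ^ (t - n) = Ms ^ d := by rw [h2]
            _ ≤ Real.exp (-(θstar * α)) ^ d := h1
            _ = Real.exp (-θstar * α * d) := by
                rw [← Real.exp_nat_mul]; congr 1; ring
        linarith [show (μ {ω | 1 ≤ delayZ a s θstar n t n ω}).toReal ≤ _ from hmarkov]
end
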